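/- arXiv:2001.09168 — 9 statements merged into one kernel-verified Lean document; each statement's English description precedes it below -/
import Mathlib

section
/- Let G be a connected graph of diameter D with a resolving set W = {w_1,...,w_k}. Then the map φ sending each vertex x to the tuple (d_G(w_1,x),...,d_G(w_k,x)) is an injective graph homomorphism (embedding) of G into the strong product of k copies of the path P_{D+1} on vertices {0,...,D}. -/
open SimpleGraph

/-- `W` is a resolving set for `G`: vertices with equal distance vectors to `W` are equal. -/
def IsResolvingSet {V : Type*} (G : SimpleGraph V) (W : Set V) : Prop :=
  ∀ u v : V, (∀ w ∈ W, G.dist w u = G.dist w v) → u = v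

/-- The metric dimension of `G`: the least cardinality of a resolving set. -/
noncomputable def metricDim {V : Type*} [Fintype V] (G : SimpleGraph V) : ℕ :=
  sInf {n | ∃ W : Finset V, W.card = n ∧ IsResolvingSet G ↑W}

/-- The threshold dimension of `G`: the least metric dimension over spanning supergraphs. -/
noncomputable def thresholdDim {V : Type*} [Fintype V] (G : SimpleGraph V) : ℕ :=
  sInf {n | ∃ H : SimpleGraph V, G ≤ H ∧ metricDim H = n}

/-- The strong product of `k` copies of the path on `{0, …, n-1}`. -/
def strongPow (n k : ℕ) : SimpleGraph (Fin k → Fin n) where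
  Adj x y := x ≠ y ∧ ∀ i, ((x i : ℤ) - (y i : ℤ)).natAbs ≤ 1
  symm := by
    constructor
    rintro x y ⟨h1, h2⟩
    refine ⟨fun h => h1 h.symm, fun i => ?_⟩
    rw [show (y i : ℤ) - (x i : ℤ) = -((x i : ℤ) - (y i : ℤ)) by ring, Int.natAbs_neg]
    exact h2 i
  loopless := ⟨fun x ⟨h, _⟩ => h rfl⟩

/-- The distance-vector map of a connected graph with resolving set `{w 1, …, w k}`
is an embedding into the strong product of `k` copies of `P (D+1)`. -/
theorem distanceVector_embedding {V : Type*} [Fintype V] (G : SimpleGraph V)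
    (hG : G.Connected) (D k : ℕ) (hD : G.diam = D)
    (w : Fin k → V) (hw : Function.Injective w)
    (hres : IsResolvingSet G (Set.range w))
    (φ : V → (Fin k → Fin (D + 1)))
    (hφ : ∀ (x : V) (i : Fin k), (φ x i : ℕ) = G.dist (w i) x) :
    Function.Injective φ ∧
      ∀ u v : V, G.Adj u v → (strongPow (D + 1) k).Adj (φ u) (φ v) := by
  have hinj : Function.Injective φ := by
    intro u v huv
    apply hres u v
    rintro _ ⟨i, rfl⟩
    rw [← hφ u i, ← hφ v i, huv]
  refine ⟨hinj, fun u v huv => ?_⟩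
  refine ⟨fun h => huv.ne (hinj h), fun i => ?_⟩
  have h1 : G.dist (w i) u ≤ G.dist (w i) v + 1 := by
    calc G.dist (w i) u ≤ G.dist (w i) v + G.dist v u := hG.dist_triangle
    _ = G.dist (w i) v + 1 := by rw [dist_eq_one_iff_adj.mpr huv.symm]
  have h2 : G.dist (w i) v ≤ G.dist (w i) u + 1 := by
    calc G.dist (w i) v ≤ G.dist (w i) u + G.dist u v := hG.dist_triangle
    _ = G.dist (w i) u + 1 := by rw [dist_eq_one_iff_adj.mpr huv]
  have e1 : ((φ u i : ℕ) : ℤ) = G.dist (w i) u := by exact_mod_cast hφ u i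
  have e2 : ((φ v i : ℕ) : ℤ) = G.dist (w i) v := by exact_mod_cast hφ v i
  rw [e1, e2]
  omega
end

section
/- Let G be a connected graph of diameter D with resolving set W = {w_1,...,w_k}, and let φ(x) = (d_G(w_1,x),...,d_G(w_k,x)). Then for every i and every vertex x, the distance in the subgraph of P_{D+1}^{⊠,k} induced by φ(V(G)) between φ(w_i) and φ(x) equals d_G(w_i,x). -/
open SimpleGraph

/-- Coordinate `i` changes by at most the walk length in the induced strong power. -/
lemma coord_le_length {n k : ℕ} {s : Set (Fin k → Fin n)}
    {a b : s} (p : ((strongPow n k).induce s).Walk a b) (i : Fin k) :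
    ((a.1 i : ℤ) - (b.1 i : ℤ)).natAbs ≤ p.length := by
  induction p with
  | nil => simp
  | cons h q ih =>
    rename_i u v c
    have h1 : ((u.1 i : ℤ) - (v.1 i : ℤ)).natAbs ≤ 1 :=
      (h : u.1 ≠ v.1 ∧ ∀ j, ((u.1 j : ℤ) - (v.1 j : ℤ)).natAbs ≤ 1).2 i
    calc ((u.1 i : ℤ) - (c.1 i : ℤ)).natAbs
        ≤ ((u.1 i : ℤ) - (v.1 i : ℤ)).natAbs + ((v.1 i : ℤ) - (c.1 i : ℤ)).natAbs := by
          have := Int.natAbs_add_le ((u.1 i : ℤ) - (v.1 i : ℤ)) ((v.1 i : ℤ) - (c.1 i : ℤ))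
          simpa using this
      _ ≤ 1 + q.length := Nat.add_le_add h1 ih
      _ = (SimpleGraph.Walk.cons h q).length := by simp [Nat.add_comm]

/-- The distance-vector embedding is `W`-resolved: distances from `φ (w i)` to `φ x` in the
subgraph induced by the image equal the corresponding distances in `G`. -/
theorem distanceVector_resolved {V : Type*} [Fintype V] (G : SimpleGraph V)
    (hG : G.Connected) (D k : ℕ) (hD : G.diam = D)
    (w : Fin k → V) (hw : Function.Injective w)
    (hres : IsResolvingSet G (Set.range w))
    (φ : V → (Fin k → Fin (D + 1)))
    (hφ : ∀ (x : V) (i : Fin k), (φ x i : ℕ) = G.dist (w i) x) :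
    ∀ (i : Fin k) (x : V),
      ((strongPow (D + 1) k).induce (Set.range φ)).dist
          ⟨φ (w i), Set.mem_range_self _⟩ ⟨φ x, Set.mem_range_self _⟩ = G.dist (w i) x := by
  intro i x
  set H := (strongPow (D + 1) k).induce (Set.range φ) with hH
  -- φ is injective
  have hφinj : Function.Injective φ := by
    intro a b hab
    apply hres a b
    rintro _ ⟨j, rfl⟩
    rw [← hφ a j, ← hφ b j, hab]
  -- hom from G to H
  have hadj : ∀ {a b : V}, G.Adj a b →
      H.Adj ⟨φ a, Set.mem_range_self _⟩ ⟨φ b, Set.mem_range_self _⟩ := by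
    intro a b hab
    show φ a ≠ φ b ∧ ∀ j, ((φ a j : ℤ) - (φ b j : ℤ)).natAbs ≤ 1
    refine ⟨fun h => hab.ne (hφinj h), fun j => ?_⟩
    have h1 : G.dist (w j) a ≤ G.dist (w j) b + 1 := by
      have := hG.dist_triangle (v := b) (u := w j) (w := a)
      have hdb : G.dist b a ≤ 1 := by
        have : G.dist b a ≤ (SimpleGraph.Walk.cons hab.symm SimpleGraph.Walk.nil).length :=
          SimpleGraph.dist_le _
        simpa using this
      omega
    have h2 : G.dist (w j) b ≤ G.dist (w j) a + 1 := by
      have := hG.dist_triangle (v := a) (u := w j) (w := b)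
      have hdb : G.dist a b ≤ 1 := by
        have : G.dist a b ≤ (SimpleGraph.Walk.cons hab SimpleGraph.Walk.nil).length :=
          SimpleGraph.dist_le _
        simpa using this
      omega
    have ea : ((φ a j : ℕ) : ℤ) = (G.dist (w j) a : ℤ) := by exact_mod_cast hφ a j
    have eb : ((φ b j : ℕ) : ℤ) = (G.dist (w j) b : ℤ) := by exact_mod_cast hφ b j
    show ((φ a j : ℤ) - (φ b j : ℤ)).natAbs ≤ 1
    rw [ea, eb]
    omega
  let f : G →g H := ⟨fun a => ⟨φ a, Set.mem_range_self _⟩, fun h => hadj h⟩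
  -- walk in G of length dist
  obtain ⟨p, hp⟩ := hG.exists_walk_length_eq_dist (w i) x
  have hub : H.dist ⟨φ (w i), Set.mem_range_self _⟩ ⟨φ x, Set.mem_range_self _⟩
      ≤ G.dist (w i) x := by
    have := SimpleGraph.dist_le (p.map f)
    simp [hp] at this
    exact this
  have hreach : H.Reachable ⟨φ (w i), Set.mem_range_self _⟩ ⟨φ x, Set.mem_range_self _⟩ :=
    ⟨p.map f⟩
  obtain ⟨q, hq⟩ := hreach.exists_walk_length_eq_dist
  have hlb := coord_le_length q i
  have e0 : (φ (w i) i : ℕ) = 0 := by rw [hφ]; exact SimpleGraph.dist_self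
  have ex : (φ x i : ℕ) = G.dist (w i) x := hφ x i
  have : ((0 : ℤ) - (G.dist (w i) x : ℤ)).natAbs ≤ q.length := by
    have e0' : ((φ (w i) i : ℕ) : ℤ) = 0 := by exact_mod_cast e0
    have ex' : ((φ x i : ℕ) : ℤ) = (G.dist (w i) x : ℤ) := by exact_mod_cast ex
    rw [← e0', ← ex']
    exact hlb
  simp only [zero_sub, Int.natAbs_neg, Int.natAbs_natCast] at this
  omega
end

section
/- Let G be a connected graph of diameter D and W ⊆ V(G) with |W| = k. Then W is a resolving set for some graph H containing G as a spanning subgraph if and only if there exists a W-resolved embedding of G in the strong product of k copies of P_{D+1}. -/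
open SimpleGraph

lemma coord_le_walk_length {n k : ℕ} {a b : Fin k → Fin n}
    (p : (strongPow n k).Walk a b) (i : Fin k) :
    ((a i : ℤ) - (b i : ℤ)).natAbs ≤ p.length := by
  induction p with
  | nil => simp
  | @cons u v x h p ih =>
    have h1 := h.2 i
    have h2 : ((u i : ℤ) - (x i : ℤ)).natAbs ≤
        ((u i : ℤ) - (v i : ℤ)).natAbs + ((v i : ℤ) - (x i : ℤ)).natAbs := by
      have := Int.natAbs_add_le ((u i : ℤ) - v i) ((v i : ℤ) - x i)
      simpa using this
    simp only [SimpleGraph.Walk.length_cons]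
    omega

lemma hom_dist_le {A B : Type*} {G1 : SimpleGraph A} {G2 : SimpleGraph B}
    (f : G1 →g G2) {u v : A} (hr : G1.Reachable u v) :
    G2.dist (f u) (f v) ≤ G1.dist u v := by
  obtain ⟨p, hp⟩ := hr.exists_walk_length_eq_dist
  calc G2.dist (f u) (f v) ≤ (p.map f).length := SimpleGraph.dist_le _
    _ = G1.dist u v := by rw [SimpleGraph.Walk.length_map, hp]

lemma iso_dist_eq {A B : Type*} {G1 : SimpleGraph A} {G2 : SimpleGraph B}
    (e : G1 ≃g G2) (u v : A) : G1.dist u v = G2.dist (e u) (e v) := by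
  by_cases hr : G1.Reachable u v
  · refine le_antisymm ?_ (hom_dist_le e.toHom hr)
    have hr2 : G2.Reachable (e u) (e v) := hr.map e.toHom
    have hco : ∀ x : A, e.symm.toHom (e x) = x := fun x => e.symm_apply_apply x
    have h2 := hom_dist_le e.symm.toHom hr2
    rwa [hco, hco] at h2
  · have hr2 : ¬ G2.Reachable (e u) (e v) := by
      intro h
      have hco : ∀ x : A, e.symm.toHom (e x) = x := fun x => e.symm_apply_apply x
      have := h.map e.symm.toHom
      rw [hco, hco] at this
      exact hr this
    rw [SimpleGraph.dist_eq_zero_of_not_reachable hr,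
      SimpleGraph.dist_eq_zero_of_not_reachable hr2]

/-- `W = range w` is a resolving set of some spanning supergraph of `G` iff there is a
`W`-resolved embedding of `G` in the strong product of `k` copies of `P (D+1)`. -/
theorem resolving_supergraph_iff_resolved_embedding {V : Type*} [Fintype V]
    (G : SimpleGraph V) (hG : G.Connected) (D k : ℕ) (hD : G.diam = D)
    (w : Fin k → V) (hw : Function.Injective w) :
    (∃ H : SimpleGraph V, G ≤ H ∧ IsResolvingSet H (Set.range w)) ↔
      ∃ φ : V → (Fin k → Fin (D + 1)), Function.Injective φ ∧
        (∀ u v : V, G.Adj u v → (strongPow (D + 1) k).Adj (φ u) (φ v)) ∧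
        ∀ (x : V) (i : Fin k), (φ x i : ℕ) =
          ((strongPow (D + 1) k).induce (Set.range φ)).dist
            ⟨φ (w i), Set.mem_range_self _⟩ ⟨φ x, Set.mem_range_self _⟩ := by
  constructor
  · rintro ⟨H, hGH, hres⟩
    have hHconn : H.Connected := hG.mono hGH
    haveI : Nonempty V := hG.nonempty
    have hGtop : G.ediam ≠ ⊤ := by
      obtain ⟨u, v, huv⟩ := G.exists_edist_eq_ediam_of_finite
      rw [← huv]
      exact (edist_ne_top_iff_reachable).mpr (hG.preconnected u v)
    have hbound : ∀ (i : Fin k) (x : V), H.dist (w i) x < D + 1 := by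
      intro i x
      have h1 : H.dist (w i) x ≤ G.dist (w i) x :=
        Reachable.dist_anti hGH (hG.preconnected _ _)
      have h2 : G.dist (w i) x ≤ G.diam := dist_le_diam hGtop
      omega
    set φ : V → (Fin k → Fin (D + 1)) :=
      fun x i => ⟨H.dist (w i) x, hbound i x⟩ with hφ
    have hval : ∀ (x : V) (i : Fin k), (φ x i : ℕ) = H.dist (w i) x := fun _ _ => rfl
    have hφinj : Function.Injective φ := by
      intro u v h
      apply hres
      rintro _ ⟨i, rfl⟩
      have := congrFun h i
      simpa [hφ, Fin.ext_iff] using this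
    have hadj : ∀ u v : V, H.Adj u v → (strongPow (D + 1) k).Adj (φ u) (φ v) := by
      intro u v huv
      refine ⟨fun he => huv.ne (hφinj he), fun i => ?_⟩
      have h1 : H.dist (w i) u ≤ H.dist (w i) v + H.dist v u :=
        hHconn.dist_triangle
      have h2 : H.dist (w i) v ≤ H.dist (w i) u + H.dist u v :=
        hHconn.dist_triangle
      have h3 : H.dist u v = 1 := dist_eq_one_iff_adj.mpr huv
      have h4 : H.dist v u = 1 := dist_eq_one_iff_adj.mpr huv.symm
      have e1 : ((φ u i : ℤ)) = (H.dist (w i) u : ℤ) := by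
        rw [← hval u i]
      have e2 : ((φ v i : ℤ)) = (H.dist (w i) v : ℤ) := by
        rw [← hval v i]
      rw [e1, e2]
      omega
    refine ⟨φ, hφinj, fun u v h => hadj u v (hGH h), fun x i => ?_⟩
    set Gi := (strongPow (D + 1) k).induce (Set.range φ) with hGi
    set ψ : H →g Gi :=
      ⟨fun x => ⟨φ x, Set.mem_range_self x⟩, fun h => hadj _ _ h⟩ with hψ
    have hreach : H.Reachable (w i) x := hHconn.preconnected _ _
    obtain ⟨p, hp⟩ := hreach.exists_walk_length_eq_dist
    have hle : Gi.dist ⟨φ (w i), Set.mem_range_self _⟩ ⟨φ x, Set.mem_range_self _⟩ ≤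
        H.dist (w i) x := by
      calc Gi.dist _ _ ≤ (p.map ψ).length := SimpleGraph.dist_le _
        _ = H.dist (w i) x := by rw [SimpleGraph.Walk.length_map, hp]
    have hge : H.dist (w i) x ≤
        Gi.dist ⟨φ (w i), Set.mem_range_self _⟩ ⟨φ x, Set.mem_range_self _⟩ := by
      have hreach2 : Gi.Reachable ⟨φ (w i), Set.mem_range_self _⟩
          ⟨φ x, Set.mem_range_self _⟩ := ⟨p.map ψ⟩
      obtain ⟨q, hq⟩ := hreach2.exists_walk_length_eq_dist
      have hthis := coord_le_walk_length
        (q.map (SimpleGraph.Embedding.induce (Set.range φ)).toHom) i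
      rw [SimpleGraph.Walk.length_map, hq] at hthis
      have hemb : ∀ y : Set.range φ,
          (SimpleGraph.Embedding.induce (G := strongPow (D+1) k) (Set.range φ)).toHom y
            = (y : Fin k → Fin (D + 1)) := fun _ => rfl
      rw [hemb, hemb] at hthis
      have hthis' : (((φ (w i) i : ℕ) : ℤ) - ((φ x i : ℕ) : ℤ)).natAbs ≤
          Gi.dist ⟨φ (w i), Set.mem_range_self _⟩ ⟨φ x, Set.mem_range_self _⟩ := hthis
      have h0 : (φ (w i) i : ℕ) = 0 := by rw [hval]; exact SimpleGraph.dist_self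
      have hx : (φ x i : ℕ) = H.dist (w i) x := hval x i
      omega
    rw [hval x i]
    omega
  · rintro ⟨φ, hφinj, hadjG, hdist⟩
    set H : SimpleGraph V := (strongPow (D + 1) k).comap φ with hH
    set Gi := (strongPow (D + 1) k).induce (Set.range φ) with hGi
    have hdistH : ∀ (x : V) (i : Fin k), H.dist (w i) x = (φ x i : ℕ) := by
      intro x i
      rw [iso_dist_eq
        (⟨Equiv.ofBijective (fun x => (⟨φ x, Set.mem_range_self x⟩ : Set.range φ))
          ⟨fun a b h => hφinj (congrArg Subtype.val h),
           fun y => by obtain ⟨y, x, hx⟩ := y; exact ⟨x, Subtype.ext hx⟩⟩,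
          fun {a b} => Iff.rfl⟩ : H ≃g Gi) (w i) x]
      exact (hdist x i).symm
    refine ⟨H, fun u v h => hadjG u v h, ?_⟩
    intro u v h
    apply hφinj
    funext i
    have hu := h (w i) ⟨i, rfl⟩
    rw [hdistH u i, hdistH v i] at hu
    exact Fin.ext hu
end

section
/- For every n ≥ 2, every connected graph G of order n satisfies 1 ≤ β(G) ≤ n−1, with β(G) = 1 if and only if G is a path, and β(G) = n−1 if and only if G is complete. -/
open SimpleGraph

set_option linter.unusedSectionVars false
set_option linter.unusedVariables false

section Aux
variable {V W' : Type*}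


/-- If `f` increases by at most 1 along edges, it changes by at most the walk length. -/
lemma lip_walk {G : SimpleGraph V} (f : V → ℕ) (hf : ∀ ⦃a b⦄, G.Adj a b → f b ≤ f a + 1)
    {u v : V} (p : G.Walk u v) : f v ≤ f u + p.length := by
  induction p with
  | nil => simp
  | @cons a b c h q ih =>
    simp only [Walk.length_cons]
    have := hf h
    omega

lemma lip_dist {G : SimpleGraph V} (f : V → ℕ) (hf : ∀ ⦃a b⦄, G.Adj a b → f b ≤ f a + 1)
    {u v : V} (h : G.Reachable u v) : f v ≤ f u + G.dist u v := by
  obtain ⟨p, hp⟩ := h.exists_walk_length_eq_dist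
  simpa [hp] using lip_walk f hf p

lemma dist_adj_le {G : SimpleGraph V} (hG : G.Connected) {w a b : V} (h : G.Adj a b) :
    G.dist w b ≤ G.dist w a + 1 := by
  calc G.dist w b ≤ G.dist w a + G.dist a b := hG.dist_triangle
    _ ≤ G.dist w a + 1 := by
        have : G.dist a b = 1 := SimpleGraph.dist_eq_one_iff_adj.mpr h
        omega

lemma dist_lt_card [Fintype V] {G : SimpleGraph V} (hG : G.Connected) (u v : V) :
    G.dist u v < Fintype.card V := by
  classical
  obtain ⟨p, hp⟩ := hG.exists_walk_length_eq_dist u v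
  have h1 : G.dist u v ≤ p.bypass.length := SimpleGraph.dist_le _
  have h2 : p.bypass.length ≤ p.length := Walk.length_bypass_le p
  have h3 : p.bypass.length < Fintype.card V := (Walk.bypass_isPath p).length_lt
  omega

/-- Penultimate vertex of a shortest walk. -/
lemma exists_penultimate {G : SimpleGraph V} {w u : V} {k : ℕ} (h : G.dist w u = k + 1) :
    ∃ y, G.Adj y u ∧ G.dist w y = k := by
  have hne : G.dist w u ≠ 0 := by omega
  obtain ⟨p, hp⟩ := SimpleGraph.exists_walk_of_dist_ne_zero hne
  have hr : G.Reachable w u := Reachable.of_dist_ne_zero hne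
  have huw : u ≠ w := by
    intro he; subst he; simp [SimpleGraph.dist_self] at h
  obtain ⟨y, hadj, q, hq⟩ := Walk.exists_eq_cons_of_ne huw p.reverse
  have hql : q.length = k := by
    have := congrArg Walk.length hq
    simp only [Walk.length_reverse, Walk.length_cons] at this
    omega
  refine ⟨y, hadj.symm, ?_⟩
  have hle : G.dist w y ≤ k := by
    have := SimpleGraph.dist_le q.reverse
    simpa [hql] using this
  have hge : k ≤ G.dist w y := by
    obtain ⟨r, hr2⟩ := SimpleGraph.Reachable.exists_walk_length_eq_dist (⟨q.reverse⟩ : G.Reachable w y)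
    have := SimpleGraph.dist_le (r.concat hadj.symm)
    rw [Walk.length_concat, hr2, h] at this
    omega
  omega

section MD
variable [Fintype V] {G : SimpleGraph V}

lemma univ_resolving (hG : G.Connected) : IsResolvingSet G ↑(Finset.univ : Finset V) := by
  intro u v h
  have := h u (by simp)
  rw [SimpleGraph.dist_self] at this
  exact (hG.dist_eq_zero_iff.mp this.symm)

lemma md_set_nonempty (hG : G.Connected) :
    {n | ∃ W : Finset V, W.card = n ∧ IsResolvingSet G ↑W}.Nonempty :=
  ⟨_, Finset.univ, rfl, univ_resolving hG⟩

lemma exists_min_resolving (hG : G.Connected) :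
    ∃ W : Finset V, W.card = metricDim G ∧ IsResolvingSet G ↑W :=
  Nat.sInf_mem (md_set_nonempty hG)

lemma md_le_of_resolving {W : Finset V} (h : IsResolvingSet G ↑W) :
    metricDim G ≤ W.card := Nat.sInf_le ⟨W, rfl, h⟩

lemma one_le_md (hG : G.Connected) (hc : 2 ≤ Fintype.card V) : 1 ≤ metricDim G := by
  rw [Nat.one_le_iff_ne_zero]
  intro h0
  have : (0 : ℕ) ∈ {n | ∃ W : Finset V, W.card = n ∧ IsResolvingSet G ↑W} := by
    rcases Nat.sInf_eq_zero.mp h0 with h | h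
    · exact h
    · exact absurd (md_set_nonempty hG) (by simp [h])
  obtain ⟨W, hW, hres⟩ := this
  rw [Finset.card_eq_zero] at hW
  subst hW
  obtain ⟨u, v, huv⟩ := Fintype.exists_pair_of_one_lt_card (α := V) (by omega)
  exact huv (hres u v (by simp))

lemma erase_resolving (hG : G.Connected) (x : V) [DecidableEq V] :
    IsResolvingSet G ↑(Finset.univ.erase x) := by
  intro u v h
  by_cases hu : u = x
  · by_cases hv : v = x
    · rw [hu, hv]
    · have := h v (by simp [hv])
      rw [SimpleGraph.dist_self] at this
      exact (hG.dist_eq_zero_iff.mp this).symm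
  · have := h u (by simp [hu])
    rw [SimpleGraph.dist_self] at this
    exact hG.dist_eq_zero_iff.mp this.symm

lemma md_le_card_sub_one (hG : G.Connected) (hc : 1 ≤ Fintype.card V) :
    metricDim G ≤ Fintype.card V - 1 := by
  classical
  obtain ⟨x⟩ : Nonempty V := Fintype.card_pos_iff.mp (by omega)
  have := md_le_of_resolving (erase_resolving hG x)
  rwa [Finset.card_erase_of_mem (by simp), Finset.card_univ] at this

end MD

section IsoDist
variable {H : SimpleGraph W'} {G : SimpleGraph V}

lemma iso_dist_le (e : G ≃g H) (a b : V) : H.dist (e a) (e b) ≤ G.dist a b := by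
  by_cases h : G.Reachable a b
  · obtain ⟨p, hp⟩ := h.exists_walk_length_eq_dist
    calc H.dist (e a) (e b) ≤ (p.map e.toHom).length := SimpleGraph.dist_le _
      _ = p.length := Walk.length_map _ _
      _ = G.dist a b := hp
  · have hH : ¬ H.Reachable (e a) (e b) := by
      intro hr
      have h2 := hr.map e.symm.toHom
      apply h
      convert h2 <;> simp
    rw [SimpleGraph.dist_eq_zero_of_not_reachable hH]
    exact Nat.zero_le _

lemma iso_dist_eq_s6 (e : G ≃g H) (a b : V) : G.dist a b = H.dist (e a) (e b) := by
  refine le_antisymm ?_ (iso_dist_le e a b)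
  have := iso_dist_le e.symm (e a) (e b)
  simpa using this

end IsoDist

section PathDist

lemma pathGraph_walk (n : ℕ) (k : ℕ) (hk : k < n) :
    ∃ p : (pathGraph n).Walk ⟨0, by omega⟩ ⟨k, hk⟩, p.length = k := by
  induction k with
  | zero => exact ⟨Walk.nil, rfl⟩
  | succ m ih =>
    obtain ⟨p, hp⟩ := ih (by omega)
    have hadj : (pathGraph n).Adj ⟨m, by omega⟩ ⟨m + 1, hk⟩ := by
      rw [pathGraph_adj]; left; rfl
    exact ⟨p.concat hadj, by rw [Walk.length_concat, hp]⟩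

lemma pathGraph_dist (n : ℕ) [NeZero n] (v : Fin n) :
    (pathGraph n).dist ⟨0, Nat.pos_of_ne_zero (NeZero.ne n)⟩ v = v.val := by
  refine le_antisymm ?_ ?_
  · obtain ⟨p, hp⟩ := pathGraph_walk n v.val v.isLt
    have := SimpleGraph.dist_le p
    rw [hp] at this
    simpa [hp] using this
  · have hlip : ∀ ⦃a b : Fin n⦄, (pathGraph n).Adj a b → b.val ≤ a.val + 1 := by
      intro a b hab
      rw [pathGraph_adj] at hab
      omega
    have hconn : (pathGraph n).Connected := by
      obtain ⟨m, rfl⟩ := Nat.exists_eq_succ_of_ne_zero (NeZero.ne n)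
      exact pathGraph_connected m
    have := lip_dist (fun x : Fin n => x.val) hlip (hconn ⟨0, Nat.pos_of_ne_zero (NeZero.ne n)⟩ v)
    simpa using this

end PathDist

section Char
variable [Fintype V] {G : SimpleGraph V}

lemma singleton_resolving_of_iso {n : ℕ} (hn : 2 ≤ n) (e : G ≃g pathGraph n) :
    IsResolvingSet G {e.symm ⟨0, by omega⟩} := by
  haveI : NeZero n := ⟨by omega⟩
  intro u v h
  have h0 := h (e.symm ⟨0, by omega⟩) rfl
  rw [iso_dist_eq_s6 e, iso_dist_eq_s6 e] at h0
  simp only [RelIso.apply_symm_apply] at h0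
  rw [pathGraph_dist, pathGraph_dist] at h0
  exact e.injective (Fin.val_injective h0)

lemma iso_of_singleton_resolving {n : ℕ} (hn : 2 ≤ n) (hcard : Fintype.card V = n)
    (hG : G.Connected) {w : V} (h : IsResolvingSet G {w}) :
    Nonempty (G ≃g pathGraph n) := by
  have hdist : ∀ v : V, G.dist w v < n := fun v => hcard ▸ dist_lt_card hG w v
  set f : V → Fin n := fun v => ⟨G.dist w v, hdist v⟩ with hf
  have hinj : Function.Injective f := by
    intro u v huv
    exact h u v (by rintro w' rfl; exact congrArg Fin.val huv)
  have hbij : Function.Bijective f :=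
    (Fintype.bijective_iff_injective_and_card f).mpr ⟨hinj, by simp [hcard]⟩
  refine ⟨⟨Equiv.ofBijective f hbij, ?_⟩⟩
  intro u v
  simp only [Equiv.ofBijective_apply, pathGraph_adj]
  constructor
  · rintro (hc | hc)
    · have hc' : G.dist w v = G.dist w u + 1 := (show G.dist w u + 1 = G.dist w v from hc).symm
      obtain ⟨y, hy, hyd⟩ := exists_penultimate hc'
      have : y = u := hinj (Fin.ext (show G.dist w y = G.dist w u from hyd))
      subst this
      exact hy
    · have hc' : G.dist w u = G.dist w v + 1 := (show G.dist w v + 1 = G.dist w u from hc).symm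
      obtain ⟨y, hy, hyd⟩ := exists_penultimate hc'
      have : y = v := hinj (Fin.ext (show G.dist w y = G.dist w v from hyd))
      subst this
      exact hy.symm
  · intro hadj
    have hd1 := dist_adj_le hG (w := w) hadj
    have hd2 := dist_adj_le hG (w := w) hadj.symm
    have hne : G.dist w u ≠ G.dist w v := by
      intro he
      exact hadj.ne (hinj (Fin.ext (show G.dist w u = G.dist w v from he)))
    show G.dist w u + 1 = G.dist w v ∨ G.dist w v + 1 = G.dist w u
    omega

lemma resolving_top_card (hc2 : 2 ≤ Fintype.card V) {W : Finset V}
    (h : IsResolvingSet (⊤ : SimpleGraph V) ↑W) : Fintype.card V - 1 ≤ W.card := by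
  classical
  by_contra hlt
  push_neg at hlt
  have hcc : 2 ≤ Wᶜ.card := by
    rw [Finset.card_compl]
    omega
  obtain ⟨u, hu, v, hv, huv⟩ := Finset.one_lt_card.mp hcc
  refine huv (h u v fun w hw => ?_)
  rw [SimpleGraph.dist_top_of_ne, SimpleGraph.dist_top_of_ne]
  · rintro rfl; exact (Finset.mem_compl.mp hv) hw
  · rintro rfl; exact (Finset.mem_compl.mp hu) hw

lemma md_le_of_not_top (hG : G.Connected) (hc2 : 2 ≤ Fintype.card V) (hne : G ≠ ⊤) :
    metricDim G ≤ Fintype.card V - 2 := by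
  classical
  -- find nonadjacent distinct pair
  have : ∃ a c : V, a ≠ c ∧ ¬ G.Adj a c := by
    by_contra hall
    push_neg at hall
    refine hne ?_
    ext a c
    simp only [SimpleGraph.top_adj]
    exact ⟨fun h => h.ne, fun h => hall a c h⟩
  obtain ⟨a, c, hac, hnadj⟩ := this
  have hd0 : G.dist a c ≠ 0 := (hG.dist_eq_zero_iff.not.mpr hac)
  have hd1 : G.dist a c ≠ 1 := fun h => hnadj (SimpleGraph.dist_eq_one_iff_adj.mp h)
  obtain ⟨k, hk⟩ : ∃ k, G.dist a c = k + 2 := ⟨G.dist a c - 2, by omega⟩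
  obtain ⟨p, hp⟩ := hG.exists_walk_length_eq_dist a c
  obtain ⟨w1, h1, p', hpeq⟩ := Walk.exists_eq_cons_of_ne hac p
  have hp' : p'.length = k + 1 := by
    have := congrArg Walk.length hpeq
    rw [hp, hk] at this
    simpa using this.symm
  cases p' with
  | nil => simp at hp'
  | @cons _ b _ h2 q =>
    have hq : q.length = k := by simpa using hp'
    have hab : a ≠ b := by
      rintro rfl
      have := SimpleGraph.dist_le q
      omega
    have hnab : ¬ G.Adj a b := by
      intro had
      have := SimpleGraph.dist_le (Walk.cons had q)
      rw [Walk.length_cons] at this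
      omega
    have hbw1 : b ≠ w1 := h2.ne'
    have haw1 : a ≠ w1 := h1.ne
    set W : Finset V := (Finset.univ.erase a).erase w1 with hW
    have hWcard : W.card = Fintype.card V - 2 := by
      rw [hW, Finset.card_erase_of_mem (by simp [haw1.symm]),
        Finset.card_erase_of_mem (by simp), Finset.card_univ]
      omega
    have hbW : b ∈ W := by simp [hW, hbw1, hab.symm]
    have hres : IsResolvingSet G ↑W := by
      intro x y hxy
      by_cases hx : x ∈ W
      · have := hxy x (by exact_mod_cast hx)
        rw [SimpleGraph.dist_self] at this
        exact hG.dist_eq_zero_iff.mp this.symm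
      by_cases hy : y ∈ W
      · have := hxy y (by exact_mod_cast hy)
        rw [SimpleGraph.dist_self] at this
        have h0 : G.dist x y = 0 := by rw [SimpleGraph.dist_comm]; exact this
        exact hG.dist_eq_zero_iff.mp h0
      -- x, y ∈ {a, w1}
      have hx' : x = w1 ∨ x = a := by
        simp only [hW, Finset.mem_erase, Finset.mem_univ, and_true] at hx
        tauto
      have hy' : y = w1 ∨ y = a := by
        simp only [hW, Finset.mem_erase, Finset.mem_univ, and_true] at hy
        tauto
      have hkey := hxy b (by exact_mod_cast hbW)
      have hdw1 : G.dist b w1 = 1 := SimpleGraph.dist_eq_one_iff_adj.mpr h2.symm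
      have hda : G.dist b a ≠ 1 := fun h =>
        hnab ((SimpleGraph.dist_eq_one_iff_adj.mp h).symm)
      rcases hx' with rfl | rfl <;> rcases hy' with rfl | rfl <;>
        first | rfl | (exfalso; omega)
    calc metricDim G ≤ W.card := md_le_of_resolving hres
      _ = Fintype.card V - 2 := hWcard

end Char


end Aux

/-- For a connected graph of order `n ≥ 2`: `1 ≤ β(G) ≤ n - 1`, with `β(G) = 1` iff `G`
is a path and `β(G) = n - 1` iff `G` is complete. -/
theorem metricDim_bounds {V : Type*} [Fintype V] (G : SimpleGraph V)
    (n : ℕ) (hn : 2 ≤ n) (hcard : Fintype.card V = n) (hG : G.Connected) :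
    1 ≤ metricDim G ∧ metricDim G ≤ n - 1 ∧
      (metricDim G = 1 ↔ Nonempty (G ≃g pathGraph n)) ∧
      (metricDim G = n - 1 ↔ G = ⊤) := by
  have hc2 : 2 ≤ Fintype.card V := by omega
  have hone : 1 ≤ metricDim G := one_le_md hG hc2
  have hub : metricDim G ≤ n - 1 := by
    have := md_le_card_sub_one hG (by omega)
    rwa [hcard] at this
  refine ⟨hone, hub, ⟨?_, ?_⟩, ⟨?_, ?_⟩⟩
  · intro h1
    obtain ⟨W, hWc, hWres⟩ := exists_min_resolving hG
    rw [h1, Finset.card_eq_one] at hWc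
    obtain ⟨w, rfl⟩ := hWc
    rw [Finset.coe_singleton] at hWres
    exact iso_of_singleton_resolving hn hcard hG hWres
  · rintro ⟨e⟩
    refine le_antisymm ?_ hone
    have hres := singleton_resolving_of_iso hn e
    have : IsResolvingSet G ↑({e.symm ⟨0, by omega⟩} : Finset V) := by
      rwa [Finset.coe_singleton]
    have := md_le_of_resolving this
    simpa using this
  · intro h
    by_contra hne
    have := md_le_of_not_top hG hc2 hne
    rw [hcard] at this
    omega
  · rintro rfl
    refine le_antisymm hub ?_
    obtain ⟨W, hWc, hWres⟩ := exists_min_resolving hG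
    have := resolving_top_card hc2 hWres
    rw [hWc, hcard] at this
    omega
end

section
/- Let T be a tree that is not a path, and let S be the set of exterior major vertices of T. Then β(T) = Σ_{v ∈ S} (ter(v) − 1). -/
open SimpleGraph

/-- A major vertex: a vertex of degree at least `3`. -/
def IsMajor {V : Type*} [Fintype V] (G : SimpleGraph V) (v : V) : Prop :=
  3 ≤ (G.neighborSet v).ncard

/-- A leaf: a vertex of degree `1`. -/
def IsLeaf {V : Type*} [Fintype V] (G : SimpleGraph V) (u : V) : Prop :=
  (G.neighborSet u).ncard = 1

/-- `u` is a terminal vertex of the major vertex `v`: `u` is a leaf and `v` is the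
(strictly) closest major vertex to `u`. -/
def IsTerminalOf {V : Type*} [Fintype V] (G : SimpleGraph V) (u v : V) : Prop :=
  IsLeaf G u ∧ IsMajor G v ∧ ∀ w : V, IsMajor G w → w ≠ v → G.dist u v < G.dist u w

/-- The terminal degree of `v`: the number of its terminal vertices. -/
noncomputable def ter {V : Type*} [Fintype V] (G : SimpleGraph V) (v : V) : ℕ :=
  {u | IsTerminalOf G u v}.ncard

/-- An exterior major vertex: a major vertex with at least one terminal vertex. -/
def IsExteriorMajor {V : Type*} [Fintype V] (G : SimpleGraph V) (v : V) : Prop :=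
  IsMajor G v ∧ 0 < ter G v

namespace TreeMD
open SimpleGraph Walk Classical
variable {V : Type*} {T : SimpleGraph V}




variable {V : Type*} {T : SimpleGraph V}

lemma path_length_eq_dist (hT : T.IsTree) {u v : V} {p : T.Walk u v} (hp : p.IsPath) :
    p.length = T.dist u v := by
  obtain ⟨q, hq, hlen⟩ := hT.isConnected.exists_path_of_dist u v
  rw [(hT.existsUnique_path u v).unique hp hq]
  exact hlen

lemma dist_add_between (hT : T.IsTree) {x y v : V} {p : T.Walk x y} (hp : p.IsPath)
    (hv : v ∈ p.support) : T.dist x v + T.dist v y = T.dist x y := by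
  classical
  have hs := p.take_spec hv
  have h1 := path_length_eq_dist hT (hp.takeUntil hv)
  have h2 := path_length_eq_dist hT (hp.dropUntil hv)
  have h3 := path_length_eq_dist hT hp
  have := congrArg Walk.length hs
  rw [Walk.length_append] at this
  omega

lemma between_mem_support (hT : T.IsTree) {x y v : V}
    (h : T.dist x v + T.dist v y = T.dist x y) {p : T.Walk x y} (hp : p.IsPath) :
    v ∈ p.support := by
  obtain ⟨p1, hp1, hl1⟩ := hT.isConnected.exists_path_of_dist x v
  obtain ⟨p2, hp2, hl2⟩ := hT.isConnected.exists_path_of_dist v y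
  have hlen : (p1.append p2).length = T.dist x y := by
    rw [Walk.length_append]; omega
  have hpath : (p1.append p2).IsPath := (p1.append p2).isPath_of_length_eq_dist hlen
  have := (hT.existsUnique_path x y).unique hp hpath
  rw [this]
  rw [Walk.mem_support_append_iff]
  exact Or.inl p1.end_mem_support

lemma adj_dist_ne (hT : T.IsTree) {a c : V} (h : T.Adj a c) (b : V) :
    T.dist b a ≠ T.dist b c := by
  classical
  intro he
  obtain ⟨q, hq, hlen⟩ := hT.isConnected.exists_path_of_dist a b
  have hc : c ∉ q.support := by
    intro hc
    have hbtw := dist_add_between hT hq hc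
    have h1 : T.dist a c = 1 := by rw [dist_eq_one_iff_adj]; exact h
    have h2 : T.dist c b = T.dist b c := dist_comm
    have h3 : T.dist a b = T.dist b a := dist_comm
    omega
  have hpath : (Walk.cons h.symm q).IsPath := hq.cons hc
  have hl := path_length_eq_dist hT hpath
  simp only [Walk.length_cons] at hl
  have h2 : T.dist c b = T.dist b c := dist_comm
  have h3 : T.dist a b = T.dist b a := dist_comm
  omega

lemma adj_dist_cases (hT : T.IsTree) {a c : V} (h : T.Adj a c) (b : V) :
    T.dist b c = T.dist b a + 1 ∨ T.dist b a = T.dist b c + 1 := by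
  have h1 : T.dist b c ≤ T.dist b a + 1 := by
    have := hT.isConnected.dist_triangle (u := b) (v := a) (w := c)
    have hac : T.dist a c = 1 := by rwa [dist_eq_one_iff_adj]
    omega
  have h2 : T.dist b a ≤ T.dist b c + 1 := by
    have := hT.isConnected.dist_triangle (u := b) (v := c) (w := a)
    have hca : T.dist c a = 1 := by rw [dist_eq_one_iff_adj]; exact h.symm
    omega
  have h3 := adj_dist_ne hT h b
  omega

lemma exists_gate (hT : T.IsTree) {a b : V} (h : a ≠ b) :
    ∃ n, T.Adj b n ∧ T.dist n a + 1 = T.dist b a := by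
  obtain ⟨p, hp, hlen⟩ := hT.isConnected.exists_path_of_dist b a
  cases p with
  | nil => exact absurd rfl h.symm
  | cons hadj q =>
    refine ⟨_, hadj, ?_⟩
    have hq := path_length_eq_dist hT hp.of_cons
    simp only [Walk.length_cons] at hlen
    omega

lemma gate_unique' (hT : T.IsTree) {a b n₁ n₂ : V} (h₁ : T.Adj b n₁)
    (hd₁ : T.dist n₁ a + 1 = T.dist b a) (h₂ : T.Adj b n₂)
    (hd₂ : T.dist n₂ a + 1 = T.dist b a) : n₁ = n₂ := by
  have key : ∀ {n : V}, T.Adj b n → T.dist n a + 1 = T.dist b a →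
      ∃ (w : T.Walk b a), w.IsPath ∧ w.getVert 1 = n := by
    intro n hn hd
    obtain ⟨q, hq, hlen⟩ := hT.isConnected.exists_path_of_dist n a
    have hbq : b ∉ q.support := by
      intro hb
      have := dist_add_between hT hq hb
      have h1 : T.dist n b = 1 := by rw [dist_eq_one_iff_adj]; exact hn.symm
      omega
    refine ⟨Walk.cons hn q, hq.cons hbq, ?_⟩
    rw [show (1:ℕ) = 0 + 1 from rfl, Walk.getVert_cons_succ, Walk.getVert_zero]
  obtain ⟨w₁, hw₁, hg₁⟩ := key h₁ hd₁
  obtain ⟨w₂, hw₂, hg₂⟩ := key h₂ hd₂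
  have := (hT.existsUnique_path b a).unique hw₁ hw₂
  rw [← hg₁, ← hg₂, this]

/-- The neighbor of `b` on the unique path from `b` to `a` (for `a ≠ b`). -/
noncomputable def gate (T : SimpleGraph V) (b a : V) : V :=
  if h : ∃ n, T.Adj b n ∧ T.dist n a + 1 = T.dist b a then h.choose else a

lemma gate_spec (hT : T.IsTree) {a b : V} (h : a ≠ b) :
    T.Adj b (gate T b a) ∧ T.dist (gate T b a) a + 1 = T.dist b a := by
  rw [gate, dif_pos (exists_gate hT h)]
  exact (exists_gate hT h).choose_spec

lemma gate_adj (hT : T.IsTree) {a b : V} (h : a ≠ b) : T.Adj b (gate T b a) :=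
  (gate_spec hT h).1

lemma gate_dist (hT : T.IsTree) {a b : V} (h : a ≠ b) :
    T.dist (gate T b a) a + 1 = T.dist b a := (gate_spec hT h).2

lemma gate_eq (hT : T.IsTree) {a b n : V} (h : a ≠ b) (hn : T.Adj b n)
    (hd : T.dist n a + 1 = T.dist b a) : gate T b a = n :=
  gate_unique' hT (gate_adj hT h) (gate_dist hT h) hn hd

lemma dist_gate_left (hT : T.IsTree) {a b : V} (h : a ≠ b) :
    T.dist a (gate T b a) + 1 = T.dist a b := by
  have h1 : T.dist a (gate T b a) = T.dist (gate T b a) a := dist_comm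
  have h2 : T.dist a b = T.dist b a := dist_comm
  have := gate_dist hT h
  omega

lemma dist_of_ne_gate (hT : T.IsTree) {a b n : V} (h : a ≠ b) (hn : T.Adj b n)
    (hne : n ≠ gate T b a) : T.dist n a = T.dist b a + 1 := by
  have e1 : T.dist a n = T.dist n a := dist_comm
  have e2 : T.dist a b = T.dist b a := dist_comm
  rcases adj_dist_cases hT hn a with hc | hc
  · omega
  · exact absurd (gate_eq hT h hn (by omega)).symm hne

lemma getVert_one_eq_gate (hT : T.IsTree) {a b : V} (h : a ≠ b) {p : T.Walk b a}
    (hp : p.IsPath) : p.getVert 1 = gate T b a := by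
  cases p with
  | nil => exact absurd rfl h.symm
  | cons hadj q =>
    rw [show (1:ℕ) = 0 + 1 from rfl, Walk.getVert_cons_succ, Walk.getVert_zero]
    refine (gate_eq hT h hadj ?_).symm
    have hq := path_length_eq_dist hT hp.of_cons
    have hl := path_length_eq_dist hT hp
    simp only [Walk.length_cons] at hl
    omega



variable {V : Type*} {T : SimpleGraph V}

lemma dist_pos_of_ne (hT : T.IsTree) {a b : V} (h : a ≠ b) : 1 ≤ T.dist b a :=
  hT.isConnected.pos_dist_of_ne (Ne.symm h)

lemma gate_of_adj (hT : T.IsTree) {b n : V} (h : T.Adj b n) : gate T b n = n := by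
  refine gate_eq hT h.ne' h ?_
  rw [T.dist_self]
  have : T.dist b n = 1 := by rw [dist_eq_one_iff_adj]; exact h
  omega

lemma gate_adj_aux (hT : T.IsTree) {b z z' : V} (hz : z ≠ b) (hz' : z' ≠ b) (h : T.Adj z z')
    (hd : T.dist b z' = T.dist b z + 1) : gate T b z' = gate T b z := by
  obtain ⟨p, hp, hlen⟩ := hT.isConnected.exists_path_of_dist b z
  set w : T.Walk b z' := p.append (Walk.cons h Walk.nil) with hw
  have hwl : w.length = T.dist b z' := by
    rw [hw, Walk.length_append]; simp; omega
  have hwp : w.IsPath := w.isPath_of_length_eq_dist hwl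
  have h1 : gate T b z' = w.getVert 1 := (getVert_one_eq_gate hT hz' hwp).symm
  have hple : 1 ≤ p.length := by rw [hlen]; exact dist_pos_of_ne hT hz
  rw [h1, Walk.getVert_append]
  rcases lt_or_eq_of_le hple with hlt | heq
  · rw [if_pos hlt]
    exact getVert_one_eq_gate hT hz hp
  · rw [if_neg (by omega)]
    have : p.getVert 1 = z := by
      have := p.getVert_length
      rw [← heq] at this
      exact this
    have hadj : T.Adj b z := by
      rw [← dist_eq_one_iff_adj, ← hlen, ← heq]
    rw [show (1 - p.length) = 0 by omega]
    simp only [Walk.getVert_zero]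
    exact (gate_of_adj hT hadj).symm

lemma gate_adj_const (hT : T.IsTree) {b z z' : V} (hz : z ≠ b) (hz' : z' ≠ b) (h : T.Adj z z') :
    gate T b z = gate T b z' := by
  rcases adj_dist_cases hT h b with hc | hc
  · exact (gate_adj_aux hT hz hz' h hc).symm
  · exact gate_adj_aux hT hz' hz h.symm hc

lemma gate_walk_const (hT : T.IsTree) {b x y : V} (p : T.Walk x y) (hb : b ∉ p.support) :
    gate T b x = gate T b y := by
  induction p with
  | nil => rfl
  | @cons u c y h q ih =>
    have hu : u ≠ b := fun he => hb (he ▸ (Walk.cons h q).start_mem_support)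
    have hc : c ≠ b := fun he => hb (by
      rw [Walk.support_cons]
      exact List.mem_cons_of_mem _ (he ▸ q.start_mem_support))
    have hb' : b ∉ q.support := fun hm => hb (by
      rw [Walk.support_cons]; exact List.mem_cons_of_mem _ hm)
    rw [gate_adj_const hT hu hc h]
    exact ih hb'

/-- Separation: if the gates from `b` towards `x` and `y` differ, `b` is between `x` and `y`. -/
lemma dist_add_of_gate_ne (hT : T.IsTree) {b x y : V} (hx : x ≠ b) (hy : y ≠ b)
    (hg : gate T b x ≠ gate T b y) : T.dist x b + T.dist b y = T.dist x y := by
  obtain ⟨p, hp, _⟩ := hT.isConnected.exists_path_of_dist x y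
  by_cases hb : b ∈ p.support
  · exact dist_add_between hT hp hb
  · exact absurd (gate_walk_const hT p hb) hg

/-- If `v` is between `m` and `z`, the gate from `m` to `z` equals the gate from `m` to `v`. -/
lemma gate_eq_of_between (hT : T.IsTree) {m v z : V} (hvm : v ≠ m)
    (h : T.dist m v + T.dist v z = T.dist m z) : gate T m z = gate T m v := by
  have hmv : 1 ≤ T.dist m v := by
    have h1 := dist_pos_of_ne hT hvm
    have h2 : T.dist m v = T.dist v m := dist_comm
    omega
  have hzm : z ≠ m := by
    intro he
    rw [he, T.dist_self] at h
    omega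
  obtain ⟨p1, hp1, hl1⟩ := hT.isConnected.exists_path_of_dist m v
  obtain ⟨p2, hp2, hl2⟩ := hT.isConnected.exists_path_of_dist v z
  set w : T.Walk m z := p1.append p2 with hw
  have hwl : w.length = T.dist m z := by rw [hw, Walk.length_append]; omega
  have hwp : w.IsPath := w.isPath_of_length_eq_dist hwl
  have h1 : gate T m z = w.getVert 1 := (getVert_one_eq_gate hT hzm hwp).symm
  rw [h1, Walk.getVert_append]
  rcases lt_or_eq_of_le (show 1 ≤ p1.length by omega) with hlt | heq
  · rw [if_pos hlt]
    exact (getVert_one_eq_gate hT hvm hp1).symm ▸ rfl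
  · rw [if_neg (by omega), show (1 - p1.length) = 0 by omega]
    simp only [Walk.getVert_zero]
    have hadj : T.Adj m v := by rw [← dist_eq_one_iff_adj]; omega
    exact (gate_of_adj hT hadj).symm

variable {V : Type*} [Fintype V] {T : SimpleGraph V}

lemma leaf_adj_unique {u n n' : V} (hu : IsLeaf T u) (h1 : T.Adj u n) (h2 : T.Adj u n') :
    n = n' := by
  obtain ⟨a, ha⟩ := Set.ncard_eq_one.1 hu
  have e1 : n ∈ T.neighborSet u := h1
  have e2 : n' ∈ T.neighborSet u := h2
  rw [ha] at e1 e2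
  rw [Set.mem_singleton_iff.1 e1, Set.mem_singleton_iff.1 e2]

lemma isLeaf_of_unique_nbr (hT : T.IsTree) {u g : V} (hadj : T.Adj u g)
    (huniq : ∀ n, T.Adj u n → n = g) : IsLeaf T u := by
  have : T.neighborSet u = {g} := by
    ext n
    simp only [mem_neighborSet, Set.mem_singleton_iff]
    exact ⟨fun h => huniq n h, fun h => h ▸ hadj⟩
  rw [IsLeaf, this, Set.ncard_singleton]

/-- Two distinct vertices equidistant from `u` force a branching vertex closer to `u`. -/
lemma branch_lemma (hT : T.IsTree) (u : V) : ∀ j : ℕ, ∀ x y : V, x ≠ y →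
    T.dist u x = j → T.dist u y = j →
    ∃ b n₁ n₂, n₁ ≠ n₂ ∧ T.Adj b n₁ ∧ T.Adj b n₂ ∧
      T.dist u n₁ = T.dist u b + 1 ∧ T.dist u n₂ = T.dist u b + 1 ∧ T.dist u b < j := by
  intro j
  induction j using Nat.strong_induction_on with
  | _ j ih =>
    intro x y hxy hx hy
    rcases Nat.eq_zero_or_pos j with h0 | hpos
    · exfalso
      apply hxy
      have hx0 : x = u := (hT.isConnected.dist_eq_zero_iff.1 (by omega)).symm
      have hy0 : y = u := (hT.isConnected.dist_eq_zero_iff.1 (by omega)).symm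
      rw [hx0, hy0]
    · have hxu : u ≠ x := by intro he; rw [← he, T.dist_self] at hx; omega
      have hyu : u ≠ y := by intro he; rw [← he, T.dist_self] at hy; omega
      have hdx := gate_dist hT hxu  -- dist (gate T x u) u + 1 = dist x u
      have hdy := gate_dist hT hyu
      have cx : T.dist u (gate T x u) = j - 1 := by
        have : T.dist u (gate T x u) = T.dist (gate T x u) u := dist_comm
        have : T.dist x u = T.dist u x := dist_comm
        omega
      have cy : T.dist u (gate T y u) = j - 1 := by
        have : T.dist u (gate T y u) = T.dist (gate T y u) u := dist_comm
        have : T.dist y u = T.dist u y := dist_comm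
        omega
      by_cases hpq : gate T x u = gate T y u
      · refine ⟨gate T x u, x, y, hxy, (gate_adj hT hxu).symm, hpq ▸ (gate_adj hT hyu).symm,
          by omega, by omega, by omega⟩
      · rcases Nat.lt_or_ge 1 j with h1 | h1
        · obtain ⟨b, n₁, n₂, h⟩ := ih (j-1) (by omega) _ _ hpq cx cy
          exact ⟨b, n₁, n₂, h.1, h.2.1, h.2.2.1, h.2.2.2.1, h.2.2.2.2.1, by omega⟩
        · exfalso
          apply hpq
          have e1 : gate T x u = u := (hT.isConnected.dist_eq_zero_iff.1 (by omega)).symm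
          have e2 : gate T y u = u := (hT.isConnected.dist_eq_zero_iff.1 (by omega)).symm
          rw [e1, e2]

lemma exists_leaf (hT : T.IsTree) (h2 : 2 ≤ Fintype.card V) : ∃ u, IsLeaf T u := by
  have hne : Nonempty V := Fintype.card_pos_iff.1 (by omega)
  obtain ⟨⟨u, v⟩, hmax⟩ := Finite.exists_max (fun p : V × V => T.dist p.1 p.2)
  obtain ⟨a, b, hab⟩ := Fintype.exists_pair_of_one_lt_card (by omega) (α := V)
  have hpos : 1 ≤ T.dist u v := le_trans (dist_pos_of_ne hT (Ne.symm hab)) (hmax (a, b))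
  have huv : v ≠ u := by intro he; rw [he, T.dist_self] at hpos; omega
  refine ⟨u, isLeaf_of_unique_nbr hT (gate_adj hT huv) fun n hn => ?_⟩
  by_contra hne'
  have := dist_of_ne_gate hT huv hn hne'
  have := hmax (n, v)
  simp only at this
  omega

/-- The branch of `T` at `m` in the direction of `n`. -/
def branch (T : SimpleGraph V) (m n : V) : Set V := {z | z ≠ m ∧ gate T m z = n}

lemma nbr_mem_branch (hT : T.IsTree) {m n : V} (h : T.Adj m n) : n ∈ branch T m n :=
  ⟨h.ne', gate_of_adj hT h⟩

/-- Transitivity: a branch at `v ∈ branch T m n₀` not pointing back to `m` stays in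
`branch T m n₀`, additively. -/
lemma branch_trans (hT : T.IsTree) {m n₀ v c z : V} (hv : v ∈ branch T m n₀)
    (hc : c ≠ gate T v m) (hz : z ∈ branch T v c) :
    z ∈ branch T m n₀ ∧ T.dist m z = T.dist m v + T.dist v z := by
  obtain ⟨hvm, hgv⟩ := hv
  obtain ⟨hzv, hgz⟩ := hz
  have hgne : gate T v z ≠ gate T v m := by rw [hgz]; exact hc
  have hmv : m ≠ v := Ne.symm hvm |>.symm.symm
  have hadd : T.dist z v + T.dist v m = T.dist z m :=
    dist_add_of_gate_ne hT hzv hmv hgne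
  have e1 : T.dist z v = T.dist v z := dist_comm
  have e2 : T.dist z m = T.dist m z := dist_comm
  have e3 : T.dist v m = T.dist m v := dist_comm
  have hzm : z ≠ m := by
    intro he
    rw [he] at hadd
    have : 1 ≤ T.dist m v := dist_pos_of_ne hT hmv.symm
    have : 1 ≤ T.dist z v := dist_pos_of_ne hT (show v ≠ z by rw [he]; exact hvm)
    rw [T.dist_self] at hadd
    omega
  have hbet : T.dist m v + T.dist v z = T.dist m z := by omega
  have := gate_eq_of_between hT hvm hbet
  exact ⟨⟨hzm, by rw [this, hgv]⟩, hbet.symm⟩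

/-- In a major-free branch at a major vertex there is a terminal vertex of it. -/
lemma exists_terminal_in_branch (hT : T.IsTree) {v c : V} (hmaj : IsMajor T v)
    (hc : T.Adj v c) (hnomaj : ∀ w ∈ branch T v c, ¬ IsMajor T w) :
    ∃ u ∈ branch T v c, IsTerminalOf T u v := by
  have hBne : (branch T v c).Nonempty := ⟨c, nbr_mem_branch hT hc⟩
  obtain ⟨u, huB, humax⟩ := Set.exists_max_image (branch T v c) (fun z => T.dist v z)
    (Set.toFinite _) hBne
  obtain ⟨huv, hgu⟩ := huB
  have hvu : v ≠ u := Ne.symm huv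
  have hdvu : 1 ≤ T.dist v u := dist_pos_of_ne hT hvu.symm
  -- u is a leaf
  have hleaf : IsLeaf T u := by
    refine isLeaf_of_unique_nbr hT (gate_adj hT hvu) fun n hn => ?_
    by_contra hne'
    have hdn : T.dist n v = T.dist u v + 1 := dist_of_ne_gate hT hvu hn hne'
    have e1 : T.dist n v = T.dist v n := dist_comm
    have e2 : T.dist u v = T.dist v u := dist_comm
    have hnv : n ≠ v := by
      intro he; rw [he, T.dist_self] at hdn; omega
    have hnB : n ∈ branch T v c := by
      refine ⟨hnv, ?_⟩
      rw [← gate_adj_const hT huv hnv hn, hgu]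
    have := humax n hnB
    omega
  refine ⟨u, ⟨huv, hgu⟩, hleaf, hmaj, fun w hw hwv => ?_⟩
  have hwB : w ∉ branch T v c := fun hmem => hnomaj w hmem hw
  have hgw : gate T v w ≠ c := by
    intro he
    exact hwB ⟨hwv, he⟩
  have hgne : gate T v u ≠ gate T v w := by rw [hgu]; exact fun he => hgw he.symm
  have hadd := dist_add_of_gate_ne hT huv hwv hgne
  have : 1 ≤ T.dist v w := dist_pos_of_ne hT hwv
  omega

variable {V : Type*} [Fintype V] {T : SimpleGraph V}

/-- If a branch contains a major vertex, then it contains two distinct terminal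
vertices of a common (exterior major) vertex. -/
lemma deep (hT : T.IsTree) {m n₀ : V} (hBmaj : ∃ w ∈ branch T m n₀, IsMajor T w) :
    ∃ v u₁ u₂, u₁ ≠ u₂ ∧ IsTerminalOf T u₁ v ∧ IsTerminalOf T u₂ v ∧
      u₁ ∈ branch T m n₀ ∧ u₂ ∈ branch T m n₀ := by
  have hne : {w | w ∈ branch T m n₀ ∧ IsMajor T w}.Nonempty := hBmaj
  obtain ⟨v, ⟨hvB, hvmaj⟩, hvmax⟩ := Set.exists_max_image _
    (fun z => T.dist m z) (Set.toFinite _) hne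
  set g := gate T v m with hg
  have h3 : 3 ≤ (T.neighborSet v).ncard := hvmaj
  have hins : T.neighborSet v ⊆ insert g (T.neighborSet v \ {g}) := by
    intro a ha
    by_cases hag : a = g
    · exact hag ▸ Set.mem_insert _ _
    · exact Set.mem_insert_of_mem _ ⟨ha, hag⟩
  have h2 : 2 ≤ (T.neighborSet v \ {g}).ncard := by
    have hle := Set.ncard_le_ncard hins (Set.toFinite _)
    have := Set.ncard_insert_le g (T.neighborSet v \ {g})
    omega
  have h2' : 1 < (T.neighborSet v \ {g}).ncard := by omega
  obtain ⟨c₁, c₂, hc₁, hc₂, hcc⟩ := (Set.one_lt_ncard_iff (Set.toFinite _)).1 h2'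
  obtain ⟨hc₁adj, hc₁g⟩ : T.Adj v c₁ ∧ c₁ ≠ g := ⟨hc₁.1, by simpa using hc₁.2⟩
  obtain ⟨hc₂adj, hc₂g⟩ : T.Adj v c₂ ∧ c₂ ≠ g := ⟨hc₂.1, by simpa using hc₂.2⟩
  have hnomaj : ∀ c, T.Adj v c → c ≠ g → ∀ w ∈ branch T v c, ¬ IsMajor T w := by
    intro c _ hcg w hw hwmaj
    obtain ⟨hwB, hadd⟩ := branch_trans hT hvB (hg ▸ hcg) hw
    have hmax := hvmax w ⟨hwB, hwmaj⟩
    have : 1 ≤ T.dist v w := dist_pos_of_ne hT hw.1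
    omega
  obtain ⟨u₁, hu₁B, hu₁t⟩ := exists_terminal_in_branch hT hvmaj hc₁adj (hnomaj c₁ hc₁adj hc₁g)
  obtain ⟨u₂, hu₂B, hu₂t⟩ := exists_terminal_in_branch hT hvmaj hc₂adj (hnomaj c₂ hc₂adj hc₂g)
  refine ⟨v, u₁, u₂, ?_, hu₁t, hu₂t, (branch_trans hT hvB (hg ▸ hc₁g) hu₁B).1,
    (branch_trans hT hvB (hg ▸ hc₂g) hu₂B).1⟩
  intro he
  apply hcc
  rw [← hu₁B.2, ← hu₂B.2, he]

/-- If `T` has a major vertex, some vertex has two distinct terminal vertices. -/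
lemma exists_two_terminals (hT : T.IsTree) (hmaj : ∃ w, IsMajor T w) :
    ∃ v u₁ u₂, u₁ ≠ u₂ ∧ IsTerminalOf T u₁ v ∧ IsTerminalOf T u₂ v := by
  obtain ⟨w, hw⟩ := hmaj
  have hpos : 0 < (T.neighborSet w).ncard := by have : (3:ℕ) ≤ _ := hw; omega
  obtain ⟨n, hn⟩ := (Set.ncard_pos (Set.toFinite _)).1 hpos
  have hadjn : T.Adj w n := hn
  have hwB : w ∈ branch T n (gate T n w) := ⟨hadjn.ne, rfl⟩
  obtain ⟨v, u₁, u₂, h1, h2, h3, _, _⟩ := deep hT ⟨w, hwB, hw⟩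
  exact ⟨v, u₁, u₂, h1, h2, h3⟩

lemma terminal_unique {u v v' : V} (h : IsTerminalOf T u v) (h' : IsTerminalOf T u v') :
    v = v' := by
  by_contra hne
  have h1 := h.2.2 v' h'.2.1 (Ne.symm hne)
  have h2 := h'.2.2 v h.2.1 hne
  omega

/-- Every leaf has a (strictly) nearest major vertex, provided major vertices exist. -/
lemma exists_terminalOf (hT : T.IsTree) (hmaj : ∃ w, IsMajor T w) {u : V}
    (hu : IsLeaf T u) : ∃ v, IsTerminalOf T u v := by
  obtain ⟨v, hv, hvmin⟩ := Set.exists_min_image {w | IsMajor T w}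
    (fun z => T.dist u z) (Set.toFinite _) hmaj
  refine ⟨v, hu, hv, fun w hw hwv => ?_⟩
  have hle : T.dist u v ≤ T.dist u w := hvmin w hw
  rcases lt_or_eq_of_le hle with hlt | heq
  · exact hlt
  · exfalso
    obtain ⟨b, n₁, n₂, hnn, hbn₁, hbn₂, hd₁, hd₂, hblt⟩ :=
      branch_lemma hT u (T.dist u v) v w hwv.symm rfl heq.symm
    by_cases hbu : b = u
    · exact hnn (leaf_adj_unique hu (hbu ▸ hbn₁) (hbu ▸ hbn₂))
    · have hub : u ≠ b := Ne.symm hbu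
      set g := gate T b u with hg
      have hgd := gate_dist hT hub
      rw [← hg] at hgd
      have e2 : T.dist b u = T.dist u b := dist_comm
      have e3 : T.dist n₁ u = T.dist u n₁ := dist_comm
      have e4 : T.dist n₂ u = T.dist u n₂ := dist_comm
      have hgn₁ : g ≠ n₁ := by intro he; rw [he] at hgd; omega
      have hgn₂ : g ≠ n₂ := by intro he; rw [he] at hgd; omega
      have hsub : ({n₁, n₂, g} : Set V) ⊆ T.neighborSet b := by
        intro a ha
        rcases ha with rfl | rfl | ha
        · exact hbn₁
        · exact hbn₂
        · rw [Set.mem_singleton_iff.1 ha]; exact gate_adj hT hub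
      have hcard : ({n₁, n₂, g} : Set V).ncard = 3 := by
        rw [Set.ncard_insert_of_notMem (by simp [hnn, Ne.symm hgn₁]) (Set.toFinite _),
          Set.ncard_insert_of_notMem (by simp [Ne.symm hgn₂]) (Set.toFinite _),
          Set.ncard_singleton]
      have hbmaj : IsMajor T b := by
        show 3 ≤ _
        rw [← hcard]
        exact Set.ncard_le_ncard hsub (Set.toFinite _)
      have := hvmin b hbmaj
      omega

variable {V : Type*} [Fintype V] {T : SimpleGraph V}

/-- Two distinct vertices equidistant from a leaf force a major vertex strictly closer. -/
lemma branch_major (hT : T.IsTree) {u : V} (hu : IsLeaf T u) {x y : V} (hxy : x ≠ y)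
    (hd : T.dist u x = T.dist u y) : ∃ b, IsMajor T b ∧ T.dist u b < T.dist u x := by
  obtain ⟨b, n₁, n₂, hnn, hbn₁, hbn₂, hd₁, hd₂, hblt⟩ :=
    branch_lemma hT u (T.dist u x) x y hxy rfl hd.symm
  by_cases hbu : b = u
  · exact absurd (leaf_adj_unique hu (hbu ▸ hbn₁) (hbu ▸ hbn₂)) hnn
  · have hub : u ≠ b := Ne.symm hbu
    set g := gate T b u with hg
    have hgd := gate_dist hT hub
    rw [← hg] at hgd
    have e2 : T.dist b u = T.dist u b := dist_comm
    have e3 : T.dist n₁ u = T.dist u n₁ := dist_comm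
    have e4 : T.dist n₂ u = T.dist u n₂ := dist_comm
    have hgn₁ : g ≠ n₁ := by intro he; rw [he] at hgd; omega
    have hgn₂ : g ≠ n₂ := by intro he; rw [he] at hgd; omega
    have hsub : ({n₁, n₂, g} : Set V) ⊆ T.neighborSet b := by
      intro a ha
      rcases ha with rfl | rfl | ha
      · exact hbn₁
      · exact hbn₂
      · rw [Set.mem_singleton_iff.1 ha]; rw [hg]; exact gate_adj hT hub
    have hcard : ({n₁, n₂, g} : Set V).ncard = 3 := by
      rw [Set.ncard_insert_of_notMem (by simp [hnn, Ne.symm hgn₁]) (Set.toFinite _),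
        Set.ncard_insert_of_notMem (by simp [Ne.symm hgn₂]) (Set.toFinite _),
        Set.ncard_singleton]
    refine ⟨b, ?_, hblt⟩
    show 3 ≤ _
    rw [← hcard]
    exact Set.ncard_le_ncard hsub (Set.toFinite _)

/-- A tree none of whose vertices is major is a path graph. -/
lemma exists_major (hT : T.IsTree) (hnp : ∀ n : ℕ, IsEmpty (T ≃g pathGraph n)) :
    ∃ v, IsMajor T v := by
  by_contra hno
  push_neg at hno

  by_cases hVe : IsEmpty V
  · exact (hnp 0).false ⟨Equiv.equivOfIsEmpty V (Fin 0), fun {a} => isEmptyElim a⟩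
  rw [not_isEmpty_iff] at hVe
  set n := Fintype.card V with hn
  have hn1 : 1 ≤ n := Fintype.card_pos
  rcases eq_or_lt_of_le hn1 with h1 | h2
  · obtain ⟨a, ha⟩ := Fintype.card_eq_one_iff.1 h1.symm
    have hequiv : V ≃ Fin n := (Fintype.equivFinOfCardEq rfl)
    refine (hnp n).false ⟨hequiv, fun {c d} => ?_⟩
    have hc : c = a := ha c
    have hd : d = a := ha d
    subst hc; subst hd
    constructor
    · intro h; exact absurd h ((pathGraph n).loopless.irrefl _)
    · intro h; exact absurd h (T.loopless.irrefl _)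
  · -- n ≥ 2
    obtain ⟨r, hr⟩ := exists_leaf hT (by omega)
    have hbnd : ∀ v, T.dist r v < n := by
      intro v
      obtain ⟨p, hp, hlen⟩ := hT.isConnected.exists_path_of_dist r v
      rw [← hlen]
      exact hp.length_lt
    set f : V → Fin n := fun v => ⟨T.dist r v, hbnd v⟩ with hf
    have hinj : Function.Injective f := by
      intro a b hab
      by_contra hne
      have hd : T.dist r a = T.dist r b := by
        have := congrArg Fin.val hab
        simpa [hf] using this
      obtain ⟨c, hcmaj, _⟩ := branch_major hT hr hne hd
      exact hno c hcmaj
    have hbij : Function.Bijective f := by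
      rw [Fintype.bijective_iff_injective_and_card]
      exact ⟨hinj, by simp [hn]⟩
    refine (hnp n).false ⟨Equiv.ofBijective f hbij, fun {a b} => ?_⟩
    rw [pathGraph_adj]
    simp only [Equiv.ofBijective_apply, hf]
    constructor
    · rintro (hab | hab)
      · -- dist r a + 1 = dist r b  →  Adj a b
        have hrb : r ≠ b := by
          intro he; rw [← he, T.dist_self] at hab; omega
        have hgd := gate_dist hT hrb
        have e1 : T.dist (gate T b r) r = T.dist r (gate T b r) := dist_comm
        have e2 : T.dist b r = T.dist r b := dist_comm
        have : f (gate T b r) = f a := by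
          apply Fin.ext
          simp only [hf]
          omega
        have := hinj this
        rw [← this]
        exact (gate_adj hT hrb).symm
      · have hra : r ≠ a := by
          intro he; rw [← he, T.dist_self] at hab; omega
        have hgd := gate_dist hT hra
        have e1 : T.dist (gate T a r) r = T.dist r (gate T a r) := dist_comm
        have e2 : T.dist a r = T.dist r a := dist_comm
        have : f (gate T a r) = f b := by
          apply Fin.ext
          simp only [hf]
          omega
        have := hinj this
        rw [← this]
        exact gate_adj hT hra
    · intro hab
      rcases adj_dist_cases hT hab r with hc | hc
      · exact Or.inl (by omega)
      · exact Or.inr (by omega)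

variable {V : Type*} [Fintype V] {T : SimpleGraph V}

/-- The leg of a terminal vertex `u` of `v`: vertices between `u` and `v`, except `v`. -/
def leg (T : SimpleGraph V) (u v : V) : Set V :=
  {z | T.dist u z + T.dist z v = T.dist u v ∧ z ≠ v}

lemma dist_pos' (hT : T.IsTree) {a b : V} (h : a ≠ b) : 1 ≤ T.dist a b :=
  dist_pos_of_ne hT (Ne.symm h)

lemma terminal_ne {u v : V} (ht : IsTerminalOf T u v) : u ≠ v := by
  intro he
  have h1 : (T.neighborSet u).ncard = 1 := ht.1
  have h3 : 3 ≤ (T.neighborSet v).ncard := ht.2.1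
  rw [he] at h1
  omega

lemma self_mem_leg {u v : V} (ht : IsTerminalOf T u v) : u ∈ leg T u v := by
  refine ⟨by rw [T.dist_self]; omega, terminal_ne ht⟩

lemma gate_ne_of_between (hT : T.IsTree) {u v z : V} (hzu : z ≠ u) (hzv : z ≠ v)
    (hbet : T.dist u z + T.dist z v = T.dist u v) : gate T z u ≠ gate T z v := by
  intro he
  set g := gate T z u with hg
  have hd1 := gate_dist hT (Ne.symm hzu)
  rw [← hg] at hd1
  have hd2 := gate_dist hT (Ne.symm hzv)
  rw [← he] at hd2
  have htri := hT.isConnected.dist_triangle (u := u) (v := g) (w := v)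
  have e1 : T.dist u g = T.dist g u := dist_comm
  have e2 : T.dist u z = T.dist z u := dist_comm
  omega

lemma leg_not_major (hT : T.IsTree) {u v z : V} (ht : IsTerminalOf T u v) (hz : z ∈ leg T u v) :
    ¬ IsMajor T z := by
  intro hmaj
  have hzv : z ≠ v := hz.2
  have hstrict := ht.2.2 z hmaj hzv
  have hd : 1 ≤ T.dist z v := dist_pos' hT hzv
  have hd2 : T.dist u z ≤ T.dist u v := by
    have := hz.1
    omega
  omega

lemma leg_nbrs (hT : T.IsTree) {u v z : V} (ht : IsTerminalOf T u v) (hz : z ∈ leg T u v)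
    (hzu : z ≠ u) : T.neighborSet z = {gate T z u, gate T z v} := by
  have hzv : z ≠ v := hz.2
  have hgne : gate T z u ≠ gate T z v := gate_ne_of_between hT hzu hzv hz.1
  have hsub : ({gate T z u, gate T z v} : Set V) ⊆ T.neighborSet z := by
    rintro a (rfl | ha)
    · exact gate_adj hT (Ne.symm hzu)
    · rw [Set.mem_singleton_iff.1 ha]; exact gate_adj hT (Ne.symm hzv)
  have hle : (T.neighborSet z).ncard ≤ 2 := by
    have := leg_not_major hT ht hz
    simp only [IsMajor, not_le] at this
    omega
  have hpair : ({gate T z u, gate T z v} : Set V).ncard = 2 := Set.ncard_pair hgne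
  exact (Set.eq_of_subset_of_ncard_le hsub (by omega) (Set.toFinite _)).symm

/-- If the gate from `v` towards `w` coincides with the gate towards its terminal `u`,
then `w` lies on the leg of `u`. -/
lemma mem_leg_of_gate (hT : T.IsTree) {u v : V} (ht : IsTerminalOf T u v) :
    ∀ j w, T.dist v w = j → w ≠ v → gate T v w = gate T v u → w ∈ leg T u v := by
  have huv : u ≠ v := terminal_ne ht
  intro j
  induction j using Nat.strong_induction_on with
  | _ j ih =>
    intro w hj hwv hgw
    have hj1 : 1 ≤ j := by
      rw [← hj]
      have := dist_pos_of_ne hT (Ne.symm hwv)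
      have e : T.dist v w = T.dist w v := dist_comm
      omega
    rcases eq_or_lt_of_le hj1 with h1 | h2
    · -- w is a neighbor of v, hence w = gate T v u
      have hadj : T.Adj v w := by rw [← dist_eq_one_iff_adj, hj]; omega
      have hw : w = gate T v u := by rw [← hgw, gate_of_adj hT hadj]
      have hgd := gate_dist hT huv
      rw [← hw] at hgd
      have e0 : T.dist v u = T.dist u v := dist_comm
      have e1 : T.dist w u = T.dist u w := dist_comm
      have e2 : T.dist w v = T.dist v w := dist_comm
      have hd2 : T.dist w v = 1 := by rw [e2, hj]; omega
      exact ⟨by omega, hwv⟩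
    · -- j ≥ 2
      set w' := gate T w v with hw'
      have hvw : v ≠ w := Ne.symm hwv
      have hgd := gate_dist hT hvw
      rw [← hw'] at hgd
      have e1 : T.dist w' v = T.dist v w' := dist_comm
      have e2 : T.dist w v = T.dist v w := dist_comm
      have hdw' : T.dist v w' = j - 1 := by omega
      have hw'v : w' ≠ v := by
        intro he
        rw [he, T.dist_self] at hdw'
        omega
      have hadj : T.Adj w w' := gate_adj hT hvw
      have hgw' : gate T v w' = gate T v u := by
        rw [← gate_adj_const hT hwv hw'v hadj]
        exact hgw
      have hmem := ih (j-1) (by omega) w' hdw' hw'v hgw'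
      -- now w' ∈ leg u v
      by_cases hwu : w' = u
      · exfalso
        -- w is a neighbor of the leaf u, so w = gate T u v; derive contradiction
        have huvne : v ≠ u := Ne.symm huv
        have hadjuw : T.Adj u w := by rw [← hwu]; exact hadj.symm
        have hwgate : w = gate T u v := leaf_adj_unique ht.1 hadjuw (gate_adj hT huvne)
        have hgd2 := gate_dist hT huvne
        rw [← hwgate] at hgd2
        -- dist w v + 1 = dist u v
        have hgd3 := hgd
        rw [hwu] at hgd3
        -- dist u v + 1 = dist w v
        omega
      · have hw'leg := hmem
        have hnbrs := leg_nbrs hT ht hw'leg hwu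
        have hwmem : w ∈ T.neighborSet w' := hadj.symm
        rw [hnbrs] at hwmem
        have hvw' : v ≠ w' := Ne.symm hw'v
        have huw' : u ≠ w' := Ne.symm hwu
        have hgv := gate_dist hT hvw'   -- dist (gate T w' v) v + 1 = dist w' v
        have hgu := gate_dist hT huw'   -- dist (gate T w' u) u + 1 = dist w' u
        have hwne : w ≠ gate T w' v := by
          intro he
          rw [← he] at hgv
          -- dist w v + 1 = dist w' v; but dist v w = j, dist v w' = j - 1
          have e3 : T.dist w v = T.dist v w := dist_comm
          have e4 : T.dist w' v = T.dist v w' := dist_comm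
          omega
        have hwgu : w = gate T w' u := by
          rcases hwmem with he | he
          · exact he
          · exact absurd (Set.mem_singleton_iff.1 he) hwne
        rw [← hwgu] at hgu
        -- dist w u + 1 = dist w' u
        have hbet' := hw'leg.1
        have e5 : T.dist w u = T.dist u w := dist_comm
        have e6 : T.dist w' u = T.dist u w' := dist_comm
        have e7 : T.dist w' v = T.dist v w' := dist_comm
        have e8 : T.dist w v = T.dist v w := dist_comm
        exact ⟨by omega, hwv⟩

lemma cover (hT : T.IsTree) {u v : V} (ht : IsTerminalOf T u v) {w : V}
    (hw : w ∉ leg T u v) : T.dist w (gate T v u) = T.dist w v + 1 := by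
  have huv : u ≠ v := terminal_ne ht
  by_cases hwv : w = v
  · subst hwv
    have h1 : T.dist w (gate T w u) = 1 := by
      rw [dist_eq_one_iff_adj]; exact gate_adj hT huv
    rw [h1, T.dist_self]
  · have hgne : gate T v w ≠ gate T v u := by
      intro he
      exact hw (mem_leg_of_gate hT ht (T.dist v w) w rfl hwv he)
    have := dist_of_ne_gate hT (a := w) (b := v) (n := gate T v u) hwv (gate_adj hT huv)
      (Ne.symm hgne)
    have e1 : T.dist (gate T v u) w = T.dist w (gate T v u) := dist_comm
    have e2 : T.dist v w = T.dist w v := dist_comm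
    omega

/-- Legs of distinct terminal vertices are disjoint. -/
lemma leg_disjoint (hT : T.IsTree) {u₁ v₁ u₂ v₂ : V} (h1 : IsTerminalOf T u₁ v₁)
    (h2 : IsTerminalOf T u₂ v₂) (hne : u₁ ≠ u₂) :
    ∀ j z, T.dist z u₂ = j → z ∈ leg T u₁ v₁ → z ∈ leg T u₂ v₂ → False := by
  intro j
  induction j using Nat.strong_induction_on with
  | _ j ih =>
    intro z hj hz1 hz2
    by_cases hzu2 : z = u₂
    · -- u₂ lies on leg of u₁: contradicts u₂ being a leaf
      subst hzu2
      have hzu1 : z ≠ u₁ := Ne.symm hne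
      have hgne := gate_ne_of_between hT hzu1 hz1.2 hz1.1
      exact hgne (leaf_adj_unique h2.1 (gate_adj hT (Ne.symm hzu1)) (gate_adj hT (Ne.symm hz1.2)))
    · by_cases hzu1 : z = u₁
      · -- u₁ lies on leg of u₂: contradicts u₁ being a leaf
        subst hzu1
        have hgne := gate_ne_of_between hT hzu2 hz2.2 hz2.1
        exact hgne (leaf_adj_unique h1.1 (gate_adj hT (Ne.symm hzu2)) (gate_adj hT (Ne.symm hz2.2)))
      · -- z is interior to both legs
        have hzv1 : z ≠ v₁ := hz1.2
        have hzv2 : z ≠ v₂ := hz2.2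
        have hnbrs := leg_nbrs hT h1 hz1 hzu1
        set z' := gate T z u₂ with hz'
        have hmem : z' ∈ T.neighborSet z := by rw [hz']; exact gate_adj hT (Ne.symm hzu2)
        have hgne2 := gate_ne_of_between hT hzu2 hzv2 hz2.1
        -- distances toward u₂ / v₂
        have hgu2 := gate_dist hT (Ne.symm hzu2)
        rw [← hz'] at hgu2   -- dist z' u₂ + 1 = dist z u₂
        have hd2v : T.dist z' v₂ = T.dist z v₂ + 1 := by
          have := dist_of_ne_gate hT (a := v₂) (b := z) (n := z') (Ne.symm hzv2)
            (by rw [hz']; exact gate_adj hT (Ne.symm hzu2))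
            (by rw [hz']; exact hgne2)
          have e1 : T.dist z' v₂ = T.dist z' v₂ := rfl
          exact this
        have hz2' : z' ∈ leg T u₂ v₂ := by
          refine ⟨?_, ?_⟩
          · have hbet := hz2.1
            have e1 : T.dist u₂ z' = T.dist z' u₂ := dist_comm
            have e2 : T.dist u₂ z = T.dist z u₂ := dist_comm
            omega
          · intro he
            rw [he] at hd2v
            have : 1 ≤ T.dist z v₂ := by
              have := dist_pos_of_ne hT (show v₂ ≠ z from Ne.symm hzv2)
              have e : T.dist z v₂ = T.dist v₂ z := dist_comm
              omega
            rw [T.dist_self] at hd2v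
            omega
        have hz1' : z' ∈ leg T u₁ v₁ := by
          rw [hnbrs] at hmem
          have hgne1 := gate_ne_of_between hT hzu1 hzv1 hz1.1
          rcases hmem with he | he
          · -- z' = gate T z u₁
            have hgu1 := gate_dist hT (Ne.symm hzu1)
            rw [← he] at hgu1   -- dist z' u₁ + 1 = dist z u₁
            have hd1v : T.dist z' v₁ = T.dist z v₁ + 1 := by
              have := dist_of_ne_gate hT (a := v₁) (b := z) (n := z') (Ne.symm hzv1)
                (he ▸ gate_adj hT (Ne.symm hzu1))
                (by rw [he]; exact hgne1)
              exact this
            refine ⟨?_, ?_⟩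
            · have hbet := hz1.1
              have e1 : T.dist u₁ z' = T.dist z' u₁ := dist_comm
              have e2 : T.dist u₁ z = T.dist z u₁ := dist_comm
              omega
            · intro hev
              rw [hev] at hd1v
              have : 1 ≤ T.dist z v₁ := dist_pos' hT hzv1
              rw [T.dist_self] at hd1v
              omega
          · -- z' = gate T z v₁
            rw [Set.mem_singleton_iff] at he
            have hgv1 := gate_dist hT (Ne.symm hzv1)
            rw [← he] at hgv1   -- dist z' v₁ + 1 = dist z v₁
            have hd1u : T.dist z' u₁ = T.dist z u₁ + 1 := by
              have := dist_of_ne_gate hT (a := u₁) (b := z) (n := z') (Ne.symm hzu1)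
                (he ▸ gate_adj hT (Ne.symm hzv1))
                (by rw [he]; exact fun hx => hgne1 hx.symm)
              exact this
            have hz'v1 : z' ≠ v₁ := by
              intro hev
              -- v₁ = gate T z u₂ : the major v₁ would be strictly closer to u₂ than v₂
              have hd21 : T.dist u₂ v₁ = T.dist z u₂ - 1 ∧ 1 ≤ T.dist z u₂ := by
                have e1 : T.dist u₂ v₁ = T.dist v₁ u₂ := dist_comm
                have hpos : 1 ≤ T.dist z u₂ := by
                  have := dist_pos_of_ne hT (show u₂ ≠ z from Ne.symm hzu2)
                  have e : T.dist z u₂ = T.dist u₂ z := dist_comm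
                  omega
                constructor
                · rw [e1, ← hev]; omega
                · exact hpos
              have hzlt : T.dist u₂ z < T.dist u₂ v₂ := by
                have hbet := hz2.1
                have : 1 ≤ T.dist z v₂ := dist_pos' hT hzv2
                omega
              have e2 : T.dist u₂ z = T.dist z u₂ := dist_comm
              by_cases hv12 : v₁ = v₂
              · rw [hv12] at hd21
                omega
              · have := h2.2.2 v₁ h1.2.1 hv12
                omega
            exact ⟨by
              have hbet := hz1.1
              have e1 : T.dist u₁ z' = T.dist z' u₁ := dist_comm
              have e2 : T.dist u₁ z = T.dist z u₁ := dist_comm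
              have e3 : T.dist z' v₁ = T.dist z' v₁ := rfl
              omega, hz'v1⟩
        have hj1 : 1 ≤ j := by
          rw [← hj]
          exact dist_pos' hT hzu2
        exact ih (j-1) (by omega) z' (by omega) hz1' hz2'

variable {V : Type*} [Fintype V] {T : SimpleGraph V}

/-- The nearest major vertex to a leaf. -/
noncomputable def nm (T : SimpleGraph V) (u : V) : V :=
  if h : ∃ v, IsTerminalOf T u v then h.choose else u

lemma nm_spec (hT : T.IsTree) (hmaj : ∃ w, IsMajor T w) {u : V} (hu : IsLeaf T u) :
    IsTerminalOf T u (nm T u) := by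
  have h := exists_terminalOf hT hmaj hu
  rw [nm, dif_pos h]
  exact h.choose_spec

lemma nm_eq_of_terminal {u v : V} (h : IsTerminalOf T u v) : nm T u = v := by
  have hex : ∃ v, IsTerminalOf T u v := ⟨v, h⟩
  rw [nm, dif_pos hex]
  exact terminal_unique hex.choose_spec h

lemma exterior_of_terminal {u v : V} (h : IsTerminalOf T u v) : IsExteriorMajor T v := by
  refine ⟨h.2.1, ?_⟩
  rw [ter]
  rw [Set.ncard_pos (Set.toFinite _)]
  exact ⟨u, h⟩

lemma sum_ter (hT : T.IsTree) (hmaj : ∃ w, IsMajor T w) :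
    ∑ v ∈ (Set.toFinite {v | IsExteriorMajor T v}).toFinset, ter T v
      = (Set.toFinite {u | IsLeaf T u}).toFinset.card := by
  classical
  symm
  rw [Finset.card_eq_sum_card_fiberwise (f := nm T)
    (t := (Set.toFinite {v | IsExteriorMajor T v}).toFinset)]
  · apply Finset.sum_congr rfl
    intro v hv
    rw [ter, Set.ncard_eq_toFinset_card _ (Set.toFinite _)]
    congr 1
    ext u
    simp only [Finset.mem_filter, Set.Finite.mem_toFinset, Set.mem_setOf_eq]
    constructor
    · rintro ⟨hu, hnm⟩
      rw [← hnm]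
      exact nm_spec hT hmaj hu
    · intro h
      exact ⟨h.1, nm_eq_of_terminal h⟩
  · intro u hu
    rw [Finset.mem_coe, Set.Finite.mem_toFinset] at hu ⊢
    exact exterior_of_terminal (nm_spec hT hmaj hu)

lemma ter_pos_of_mem {v : V} (hv : IsExteriorMajor T v) : 1 ≤ ter T v := hv.2

lemma sum_ter_sub (hT : T.IsTree) (hmaj : ∃ w, IsMajor T w) :
    ∑ v ∈ (Set.toFinite {v | IsExteriorMajor T v}).toFinset, (ter T v - 1)
      = (Set.toFinite {u | IsLeaf T u}).toFinset.card
        - (Set.toFinite {v | IsExteriorMajor T v}).toFinset.card := by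
  have key : ∑ v ∈ (Set.toFinite {v | IsExteriorMajor T v}).toFinset, (ter T v - 1)
      + (Set.toFinite {v | IsExteriorMajor T v}).toFinset.card
      = ∑ v ∈ (Set.toFinite {v | IsExteriorMajor T v}).toFinset, ter T v := by
    rw [Finset.card_eq_sum_ones, ← Finset.sum_add_distrib]
    apply Finset.sum_congr rfl
    intro v hv
    have := ter_pos_of_mem (T := T) (v := v) (by
      have := hv; rwa [Set.Finite.mem_toFinset] at this)
    omega
  rw [sum_ter hT hmaj] at key
  omega

/-- The gate from `v` towards its terminal `u` lies on the leg of `u`. -/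
lemma gate_mem_leg (hT : T.IsTree) {u v : V} (ht : IsTerminalOf T u v) :
    gate T v u ∈ leg T u v := by
  have huv : u ≠ v := terminal_ne ht
  have hadj : T.Adj v (gate T v u) := gate_adj hT huv
  have hd := gate_dist hT huv    -- dist (gate T v u) u + 1 = dist v u
  have h1 : T.dist (gate T v u) v = 1 := by
    have : T.dist v (gate T v u) = 1 := by rw [dist_eq_one_iff_adj]; exact hadj
    have e : T.dist (gate T v u) v = T.dist v (gate T v u) := dist_comm
    omega
  refine ⟨?_, hadj.ne'⟩
  have e1 : T.dist u (gate T v u) = T.dist (gate T v u) u := dist_comm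
  have e2 : T.dist u v = T.dist v u := dist_comm
  omega

/-- Lower bound: any resolving set has at least `L - s` elements. -/
lemma lower_bound (hT : T.IsTree) (hmaj : ∃ w, IsMajor T w) (W : Finset V)
    (hW : IsResolvingSet T ↑W) :
    (Set.toFinite {u | IsLeaf T u}).toFinset.card
      - (Set.toFinite {v | IsExteriorMajor T v}).toFinset.card ≤ W.card := by
  classical
  set leavesF := (Set.toFinite {u | IsLeaf T u}).toFinset with hLF
  set SF := (Set.toFinite {v | IsExteriorMajor T v}).toFinset with hSF
  set hitF := leavesF.filter (fun u => ∃ w ∈ W, w ∈ leg T u (nm T u)) with hhit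
  -- (1) hitF.card ≤ W.card
  set f : V → V := fun u => if h : ∃ w, w ∈ W ∧ w ∈ leg T u (nm T u) then h.choose else u
    with hf
  have hfspec : ∀ u ∈ hitF, f u ∈ W ∧ f u ∈ leg T u (nm T u) := by
    intro u hu
    rw [hhit, Finset.mem_filter] at hu
    obtain ⟨_, w, hw1, hw2⟩ := hu
    have hex : ∃ w, w ∈ W ∧ w ∈ leg T u (nm T u) := ⟨w, hw1, hw2⟩
    rw [hf]
    simp only [dif_pos hex]
    exact hex.choose_spec
  have h1 : hitF.card ≤ W.card := by
    apply Finset.card_le_card_of_injOn f (fun u hu => (hfspec u hu).1)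
    intro u₁ hu₁ u₂ hu₂ hfe
    by_contra hne
    have ht₁ : IsTerminalOf T u₁ (nm T u₁) := by
      have := hu₁; rw [Finset.mem_coe, hhit, Finset.mem_filter, hLF, Set.Finite.mem_toFinset] at this
      exact nm_spec hT hmaj this.1
    have ht₂ : IsTerminalOf T u₂ (nm T u₂) := by
      have := hu₂; rw [Finset.mem_coe, hhit, Finset.mem_filter, hLF, Set.Finite.mem_toFinset] at this
      exact nm_spec hT hmaj this.1
    exact leg_disjoint hT ht₁ ht₂ hne (T.dist (f u₁) u₂) (f u₁) rfl
      (hfspec u₁ hu₁).2 (hfe ▸ (hfspec u₂ hu₂).2)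
  -- (2) (leavesF \ hitF).card ≤ SF.card
  have h2 : (leavesF \ hitF).card ≤ SF.card := by
    apply Finset.card_le_card_of_injOn (nm T)
    · intro u hu
      rw [Finset.mem_coe, Finset.mem_sdiff, hLF, Set.Finite.mem_toFinset] at hu
      rw [Finset.mem_coe, hSF, Set.Finite.mem_toFinset]
      exact exterior_of_terminal (nm_spec hT hmaj hu.1)
    · intro u₁ hu₁ u₂ hu₂ hnm
      by_contra hne
      rw [Finset.mem_coe, Finset.mem_sdiff, hLF, Set.Finite.mem_toFinset] at hu₁ hu₂
      have ht₁ : IsTerminalOf T u₁ (nm T u₁) := nm_spec hT hmaj hu₁.1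
      have ht₂ : IsTerminalOf T u₂ (nm T u₂) := nm_spec hT hmaj hu₂.1
      set v := nm T u₁ with hv
      have ht₂' : IsTerminalOf T u₂ v := by rw [hnm]; exact ht₂
      set x := gate T v u₁ with hx
      set y := gate T v u₂ with hy
      have hxleg : x ∈ leg T u₁ v := gate_mem_leg hT ht₁
      have hyleg : y ∈ leg T u₂ v := gate_mem_leg hT ht₂'
      have hxy : x ≠ y := by
        intro he
        exact leg_disjoint hT ht₁ ht₂' hne (T.dist x u₂) x rfl hxleg (he ▸ hyleg)
      have hall : ¬ ∀ w ∈ W, T.dist w x = T.dist w y := by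
        intro hall
        exact hxy (hW x y fun w hw => hall w hw)
      push_neg at hall
      obtain ⟨w, hwW, hwne⟩ := hall
      have hw1 : w ∉ leg T u₁ (nm T u₁) := by
        intro hmem
        have := hu₁.2
        rw [hhit, Finset.mem_filter] at this
        push_neg at this
        exact absurd hmem (this (by rw [hLF, Set.Finite.mem_toFinset]; exact hu₁.1) w hwW)
      have hw2 : w ∉ leg T u₂ (nm T u₂) := by
        intro hmem
        have := hu₂.2
        rw [hhit, Finset.mem_filter] at this
        push_neg at this
        exact absurd hmem (this (by rw [hLF, Set.Finite.mem_toFinset]; exact hu₂.1) w hwW)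
      have hc1 : T.dist w x = T.dist w v + 1 := cover hT ht₁ hw1
      have hc2 : T.dist w y = T.dist w v + 1 := by
        rw [hy, hnm]
        exact cover hT ht₂ hw2
      exact hwne (by omega)
  have h3 : hitF ⊆ leavesF := Finset.filter_subset _ _
  have h4 := Finset.card_sdiff_of_subset h3
  omega

variable {V : Type*} [Fintype V] {T : SimpleGraph V}

/-- Descent to a midpoint: any vertex equidistant from `x ≠ y` lies behind a midpoint. -/
lemma desc (hT : T.IsTree) {x y : V} (hxy : x ≠ y) :
    ∀ j z, T.dist z x = j → T.dist z x = T.dist z y →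
    ∃ m, T.dist x m + T.dist m y = T.dist x y ∧ T.dist m x = T.dist m y ∧
      T.dist z x = T.dist z m + T.dist m x := by
  intro j
  induction j using Nat.strong_induction_on with
  | _ j ih =>
    intro z hj hr
    have hzx : z ≠ x := by
      intro he
      apply hxy
      rw [he, T.dist_self] at hr
      exact (hT.isConnected.dist_eq_zero_iff.1 hr.symm)
    have hzy : z ≠ y := by
      intro he
      apply hxy
      rw [he, T.dist_self] at hr
      exact ((hT.isConnected.dist_eq_zero_iff.1 hr)).symm
    by_cases hg : gate T z x = gate T z y
    · set z' := gate T z x with hz'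
      have hgx := gate_dist hT (Ne.symm hzx)
      rw [← hz'] at hgx      -- dist z' x + 1 = dist z x
      have hgy := gate_dist hT (Ne.symm hzy)
      rw [← hg] at hgy  -- dist z' y + 1 = dist z y
      have hj1 : 1 ≤ j := by rw [← hj]; exact dist_pos' hT hzx
      obtain ⟨m, hm1, hm2, hm3⟩ := ih (j-1) (by omega) z' (by omega) (by omega)
      refine ⟨m, hm1, hm2, ?_⟩
      have htri1 := hT.isConnected.dist_triangle (u := z) (v := m) (w := x)
      have htri2 := hT.isConnected.dist_triangle (u := z) (v := z') (w := m)
      have hzz' : T.dist z z' = 1 := by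
        rw [dist_eq_one_iff_adj]; rw [hz']; exact gate_adj hT (Ne.symm hzx)
      omega
    · refine ⟨z, dist_add_of_gate_ne hT (Ne.symm hzx).symm.symm (Ne.symm hzy).symm.symm hg, hr, ?_⟩
      rw [T.dist_self]
      omega

/-- Uniqueness of the midpoint. -/
lemma mid_unique (hT : T.IsTree) {x y m₁ m₂ : V}
    (h1b : T.dist x m₁ + T.dist m₁ y = T.dist x y) (h1e : T.dist m₁ x = T.dist m₁ y)
    (h2b : T.dist x m₂ + T.dist m₂ y = T.dist x y) (h2e : T.dist m₂ x = T.dist m₂ y) :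
    m₁ = m₂ := by
  obtain ⟨p, hp, hlen⟩ := hT.isConnected.exists_path_of_dist x y
  have hm₁ : m₁ ∈ p.support := between_mem_support hT h1b hp
  have hm₂ : m₂ ∈ p.support := between_mem_support hT h2b hp
  have e1 : T.dist m₁ x = T.dist x m₁ := dist_comm
  have e2 : T.dist m₂ x = T.dist x m₂ := dist_comm
  have hs := p.take_spec hm₁
  have hm₂' : m₂ ∈ (p.takeUntil m₁ hm₁).support ∨ m₂ ∈ (p.dropUntil m₁ hm₁).support := by
    rw [← Walk.mem_support_append_iff, hs]
    exact hm₂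
  rcases hm₂' with hc | hc
  · have hbet := dist_add_between hT (hp.takeUntil hm₁) hc
    have hq := path_length_eq_dist hT (hp.takeUntil hm₁)
    -- hbet : dist x m₂ + dist m₂ m₁ = dist x m₁
    have : T.dist m₂ m₁ = 0 := by omega
    exact ((hT.isConnected.dist_eq_zero_iff).1 this).symm
  · have hbet := dist_add_between hT (hp.dropUntil hm₁) hc
    have : T.dist m₁ m₂ = 0 := by omega
    exact (hT.isConnected.dist_eq_zero_iff).1 this

/-- Upper bound: the set of all leaves minus one chosen terminal per exterior major vertex
is resolving. -/
lemma upper_bound (hT : T.IsTree) (hnp : ∀ n : ℕ, IsEmpty (T ≃g pathGraph n)) :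
    ∃ W : Finset V, W.card = (Set.toFinite {u | IsLeaf T u}).toFinset.card
      - (Set.toFinite {v | IsExteriorMajor T v}).toFinset.card ∧ IsResolvingSet T ↑W := by
  classical
  have hmaj : ∃ w, IsMajor T w := exists_major hT hnp
  set leavesF := (Set.toFinite {u | IsLeaf T u}).toFinset with hLF
  set SF := (Set.toFinite {v | IsExteriorMajor T v}).toFinset with hSF
  set c : V → V := fun v => if h : ∃ u, IsTerminalOf T u v then h.choose else v with hc
  have hcspec : ∀ v ∈ SF, IsTerminalOf T (c v) v := by
    intro v hv
    rw [hSF, Set.Finite.mem_toFinset] at hv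
    have hex : ∃ u, IsTerminalOf T u v := by
      have := hv.2
      rw [ter, Set.ncard_pos (Set.toFinite _)] at this
      exact this
    rw [hc]
    simp only [dif_pos hex]
    exact hex.choose_spec
  set W := leavesF \ SF.image c with hW
  have himg : SF.image c ⊆ leavesF := by
    intro a ha
    rw [Finset.mem_image] at ha
    obtain ⟨v, hv, hcv⟩ := ha
    rw [hLF, Set.Finite.mem_toFinset]
    rw [← hcv]
    exact (hcspec v hv).1
  have hinj : Set.InjOn c ↑SF := by
    intro v₁ hv₁ v₂ hv₂ he
    have h1 := hcspec v₁ hv₁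
    have h2 := hcspec v₂ hv₂
    rw [he] at h1
    exact terminal_unique h1 h2
  have hcard : W.card = leavesF.card - SF.card := by
    rw [hW, Finset.card_sdiff_of_subset himg, Finset.card_image_of_injOn hinj]
  -- key fact: a leaf not in W is the chosen terminal of its nearest major vertex
  have hnotW : ∀ u, IsLeaf T u → u ∉ W → u = c (nm T u) := by
    intro u hu huW
    rw [hW, Finset.mem_sdiff, not_and, not_not] at huW
    have := huW (by rw [hLF, Set.Finite.mem_toFinset]; exact hu)
    rw [Finset.mem_image] at this
    obtain ⟨v, hv, hcv⟩ := this
    have ht := hcspec v hv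
    rw [hcv] at ht
    rw [nm_eq_of_terminal ht]
    exact hcv.symm
  refine ⟨W, hcard, ?_⟩
  intro xx yy hall
  by_contra hne
  have hWleaf : ∀ w ∈ W, IsLeaf T w := by
    intro w hw
    rw [hW, Finset.mem_sdiff, hLF, Set.Finite.mem_toFinset] at hw
    exact hw.1
  have hnotboth : ∀ v u₁ u₂, u₁ ≠ u₂ → IsTerminalOf T u₁ v → IsTerminalOf T u₂ v →
      u₁ ∈ W ∨ u₂ ∈ W := by
    intro v u₁ u₂ hne' h1 h2
    by_contra hb; push_neg at hb
    have e1 := hnotW u₁ h1.1 hb.1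
    have e2 := hnotW u₂ h2.1 hb.2
    rw [nm_eq_of_terminal h1] at e1
    rw [nm_eq_of_terminal h2] at e2
    exact hne' (e1.trans e2.symm)
  obtain ⟨v₀, t₁, t₂, ht12, ht₁, ht₂⟩ := exists_two_terminals hT hmaj
  obtain ⟨w₀, hw₀⟩ : ∃ w₀, w₀ ∈ W := by
    rcases hnotboth v₀ t₁ t₂ ht12 ht₁ ht₂ with h | h
    exacts [⟨t₁, h⟩, ⟨t₂, h⟩]
  obtain ⟨m, hmb, hme, _⟩ := desc hT hne (T.dist w₀ xx) w₀ rfl (hall w₀ hw₀)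
  have hbehind : ∀ w ∈ W, T.dist w xx = T.dist w m + T.dist m xx := by
    intro w hw
    obtain ⟨m', h1, h2, h3⟩ := desc hT hne (T.dist w xx) w rfl (hall w hw)
    rwa [← mid_unique hT hmb hme h1 h2] at h3
  have hmx : m ≠ xx := by
    intro he
    rw [he, T.dist_self] at hme
    exact hne (hT.isConnected.dist_eq_zero_iff.1 hme.symm)
  have hmy : m ≠ yy := by
    intro he
    rw [he, T.dist_self] at hme
    exact hne ((hT.isConnected.dist_eq_zero_iff.1 hme)).symm
  set a := gate T m xx with ha
  set b := gate T m yy with hb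
  have hga := gate_dist hT (Ne.symm hmx)
  rw [← ha] at hga   -- dist a xx + 1 = dist m xx
  have hgb := gate_dist hT (Ne.symm hmy)
  rw [← hb] at hgb   -- dist b yy + 1 = dist m yy
  have hab : a ≠ b := by
    intro he
    rw [he] at hga
    have htri := hT.isConnected.dist_triangle (u := xx) (v := b) (w := yy)
    have e1 : T.dist xx b = T.dist b xx := dist_comm
    have e2 : T.dist xx m = T.dist m xx := dist_comm
    omega
  have havoid : ∀ w ∈ W, w ≠ m ∧ gate T m w ≠ a ∧ gate T m w ≠ b := by
    intro w hw
    have hwm : w ≠ m := by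
      intro he
      have hl : IsLeaf T w := hWleaf w hw
      rw [he] at hl
      exact hab (leaf_adj_unique hl (gate_adj hT (Ne.symm hmx)) (gate_adj hT (Ne.symm hmy)))
    have hbeh := hbehind w hw
    have hbehy : T.dist w yy = T.dist w m + T.dist m yy := by
      have := hall w hw
      omega
    have hgw := gate_dist hT hwm  -- dist (gate T m w) w + 1 = dist m w
    refine ⟨hwm, ?_, ?_⟩
    · intro he
      rw [he] at hgw  -- dist a w + 1 = dist m w
      have htri := hT.isConnected.dist_triangle (u := w) (v := a) (w := xx)
      have e1 : T.dist w a = T.dist a w := dist_comm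
      have e2 : T.dist w m = T.dist m w := dist_comm
      omega
    · intro he
      rw [he] at hgw
      have htri := hT.isConnected.dist_triangle (u := w) (v := b) (w := yy)
      have e1 : T.dist w b = T.dist b w := dist_comm
      have e2 : T.dist w m = T.dist m w := dist_comm
      omega
  by_cases hba : ∃ w ∈ branch T m a, IsMajor T w
  · obtain ⟨vs, u₁, u₂, hu12, hu₁t, hu₂t, hu₁B, hu₂B⟩ := deep hT hba
    rcases hnotboth vs u₁ u₂ hu12 hu₁t hu₂t with h | h
    · exact (havoid u₁ h).2.1 hu₁B.2
    · exact (havoid u₂ h).2.1 hu₂B.2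
  · by_cases hbb : ∃ w ∈ branch T m b, IsMajor T w
    · obtain ⟨vs, u₁, u₂, hu12, hu₁t, hu₂t, hu₁B, hu₂B⟩ := deep hT hbb
      rcases hnotboth vs u₁ u₂ hu12 hu₁t hu₂t with h | h
      · exact (havoid u₁ h).2.2 hu₁B.2
      · exact (havoid u₂ h).2.2 hu₂B.2
    · push_neg at hba hbb
      by_cases hmmaj : IsMajor T m
      · have hadja : T.Adj m a := by rw [ha]; exact gate_adj hT (Ne.symm hmx)
        have hadjb : T.Adj m b := by rw [hb]; exact gate_adj hT (Ne.symm hmy)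
        obtain ⟨u₁, hu₁B, hu₁t⟩ := exists_terminal_in_branch hT hmmaj hadja
          (fun w hw hmaj' => hba w hw hmaj')
        obtain ⟨u₂, hu₂B, hu₂t⟩ := exists_terminal_in_branch hT hmmaj hadjb
          (fun w hw hmaj' => hbb w hw hmaj')
        have hu12 : u₁ ≠ u₂ := by
          intro he
          apply hab
          rw [← hu₁B.2, ← hu₂B.2, he]
        rcases hnotboth m u₁ u₂ hu12 hu₁t hu₂t with h | h
        · exact (havoid u₁ h).2.1 hu₁B.2
        · exact (havoid u₂ h).2.2 hu₂B.2
      · obtain ⟨w, hwmaj⟩ := hmaj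
        have hwm : w ≠ m := fun he => hmmaj (he ▸ hwmaj)
        have hnbr : T.neighborSet m = {a, b} := by
          have hsub : ({a, b} : Set V) ⊆ T.neighborSet m := by
            rintro d (rfl | hd)
            · rw [ha]; exact gate_adj hT (Ne.symm hmx)
            · rw [Set.mem_singleton_iff.1 hd, hb]; exact gate_adj hT (Ne.symm hmy)
          have hle : (T.neighborSet m).ncard ≤ 2 := by
            simp only [IsMajor, not_le] at hmmaj
            omega
          have hpair : ({a, b} : Set V).ncard = 2 := Set.ncard_pair hab
          exact (Set.eq_of_subset_of_ncard_le hsub (by omega) (Set.toFinite _)).symm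
        have hmem : gate T m w ∈ T.neighborSet m := gate_adj hT hwm
        rw [hnbr] at hmem
        rcases hmem with he | he
        · exact hba w ⟨hwm, he⟩ hwmaj
        · exact hbb w ⟨hwm, Set.mem_singleton_iff.1 he⟩ hwmaj
end TreeMD

/-- For a tree `T` that is not a path, `β(T) = Σ_{v exterior major} (ter v - 1)`. -/
theorem tree_metricDim_formula {V : Type*} [Fintype V] (T : SimpleGraph V)
    (hT : T.IsTree) (hnp : ∀ n : ℕ, IsEmpty (T ≃g pathGraph n)) :
    metricDim T =
      ∑ v ∈ (Set.toFinite {v | IsExteriorMajor T v}).toFinset, (ter T v - 1) := by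
  have hmaj := TreeMD.exists_major hT hnp
  rw [TreeMD.sum_ter_sub hT hmaj]
  rw [metricDim]
  apply le_antisymm
  · obtain ⟨W, hWc, hWr⟩ := TreeMD.upper_bound hT hnp
    exact Nat.sInf_le ⟨W, hWc, hWr⟩
  · apply le_csInf
    · refine ⟨(Finset.univ : Finset V).card, Finset.univ, rfl, ?_⟩
      intro u v h
      have := h u (by simp)
      rw [T.dist_self] at this
      exact hT.isConnected.dist_eq_zero_iff.1 this.symm
    · rintro n ⟨W, rfl, hWr⟩
      exact TreeMD.lower_bound hT hmaj W hWr
end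

section
/- For every tree T of order n ≥ 1, the threshold dimension τ(T) is at most g(n), where g(n) is the least nonnegative integer d with 2^d + d ≥ n. -/
open SimpleGraph

/-- `gfun n` is the least nonnegative integer `d` with `2 ^ d + d ≥ n`. -/
noncomputable def gfun (n : ℕ) : ℕ := sInf {d | n ≤ 2 ^ d + d}

/-- In a tree, a vertex has at most one neighbour at distance (from a fixed root `r`)
not exceeding its own. -/
lemma tree_unique_down {V : Type*} {T : SimpleGraph V} (hT : T.IsTree) (r w u₁ u₂ : V)
    (h1 : T.Adj w u₁) (h2 : T.Adj w u₂) (d1 : T.dist r u₁ ≤ T.dist r w)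
    (d2 : T.dist r u₂ ≤ T.dist r w) : u₁ = u₂ := by
  classical
  have hconn := hT.isConnected
  have key : ∀ u : V, T.Adj w u → T.dist r u ≤ T.dist r w →
      ∃ q : T.Walk w r, q.IsPath ∧ q.getVert 1 = u := by
    intro u hadj hd
    obtain ⟨p, hp, hl⟩ := hconn.exists_path_of_dist r u
    have hw : w ∉ p.support := by
      intro hw
      have h1' : T.dist r w ≤ (p.takeUntil w hw).length := SimpleGraph.dist_le _
      have h2' : T.dist w u ≤ (p.dropUntil w hw).length := SimpleGraph.dist_le _
      have hsum : (p.takeUntil w hw).length + (p.dropUntil w hw).length = p.length := by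
        rw [← SimpleGraph.Walk.length_append, SimpleGraph.Walk.take_spec]
      have hpos : 0 < T.dist w u := hconn.pos_dist_of_ne hadj.ne
      omega
    refine ⟨SimpleGraph.Walk.cons hadj p.reverse, ?_, ?_⟩
    · refine hp.reverse.cons ?_
      rw [SimpleGraph.Walk.support_reverse, List.mem_reverse]
      exact hw
    · exact (SimpleGraph.Walk.getVert_cons_succ (n := 0) p.reverse hadj).trans (SimpleGraph.Walk.getVert_zero _)
  obtain ⟨q1, hq1, hg1⟩ := key u₁ h1 d1
  obtain ⟨q2, hq2, hg2⟩ := key u₂ h2 d2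
  have : q1 = q2 := (hT.existsUnique_path w r).unique hq1 hq2
  rw [← hg1, ← hg2, this]

/-- Existence of a set `W` of `d` vertices whose distances from `r` dominate those of all
other vertices. -/
lemma exists_top_set {V : Type*} [Fintype V] [DecidableEq V] (f : V → ℕ) (d : ℕ)
    (hd : d ≤ Fintype.card V) :
    ∃ W : Finset V, W.card = d ∧ ∀ v ∉ W, ∀ w ∈ W, f v ≤ f w := by
  have hne : (Finset.powersetCard d (Finset.univ : Finset V)).Nonempty := by
    rw [Finset.powersetCard_nonempty]
    simpa using hd
  obtain ⟨W, hWmem, hWmax⟩ :=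
    Finset.exists_max_image (Finset.powersetCard d (Finset.univ : Finset V))
      (fun W => ∑ w ∈ W, f w) hne
  have hWcard : W.card = d := (Finset.mem_powersetCard.1 hWmem).2
  refine ⟨W, hWcard, ?_⟩
  intro v hv w hw
  by_contra hlt
  push_neg at hlt
  set W' : Finset V := insert v (W.erase w) with hW'
  have hvW' : v ∉ W.erase w := fun h => hv (Finset.mem_of_mem_erase h)
  have hcard' : W'.card = d := by
    rw [hW', Finset.card_insert_of_notMem hvW', Finset.card_erase_of_mem hw, hWcard]
    have : 1 ≤ d := by
      rcases Nat.eq_zero_or_pos d with h0 | h1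
      · exfalso; rw [h0] at hWcard
        exact absurd hw (by simp [Finset.card_eq_zero.1 hWcard])
      · exact h1
    omega
  have hmem' : W' ∈ Finset.powersetCard d (Finset.univ : Finset V) := by
    rw [Finset.mem_powersetCard]
    exact ⟨Finset.subset_univ _, hcard'⟩
  have hsum' : ∑ x ∈ W', f x = f v + ∑ x ∈ W.erase w, f x := by
    rw [hW', Finset.sum_insert hvW']
  have hsplit : f w + ∑ x ∈ W.erase w, f x = ∑ x ∈ W, f x :=
    Finset.add_sum_erase W f hw
  have := hWmax W' hmem'
  omega

/-- Given pairwise disjoint "forced" subsets of `W` for the vertices outside `W`,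
there is an injective assignment of subsets of `W` extending the forced sets. -/
lemma exists_injective_assignment {V : Type*} [Fintype V] [DecidableEq V]
    (W : Finset V) (F : V → Finset V) (hFW : ∀ v ∉ W, F v ⊆ W)
    (hdisj : ∀ v₁ ∉ W, ∀ v₂ ∉ W, v₁ ≠ v₂ → Disjoint (F v₁) (F v₂))
    (hcard : Fintype.card V - W.card ≤ 2 ^ W.card) :
    ∃ S : V → Finset V, (∀ v ∉ W, F v ⊆ S v ∧ S v ⊆ W) ∧
      ∀ v₁ ∉ W, ∀ v₂ ∉ W, S v₁ = S v₂ → v₁ = v₂ := by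
  classical
  set R : Finset V := Finset.univ \ W with hR
  set A : Finset V := R.filter (fun v => (F v).Nonempty) with hA
  set B : Finset V := R.filter (fun v => ¬(F v).Nonempty) with hB
  have hRmem : ∀ v : V, v ∈ R ↔ v ∉ W := by intro v; simp [hR]
  have hFinjA : Set.InjOn F ↑A := by
    intro x hx y hy hxy
    by_contra hne
    have hxA := Finset.mem_filter.1 hx
    have hyA := Finset.mem_filter.1 hy
    have hd := hdisj x ((hRmem x).1 hxA.1) y ((hRmem y).1 hyA.1) hne
    rw [hxy] at hd
    exact (hyA.2).ne_empty (disjoint_self.1 hd)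
  set I : Finset (Finset V) := A.image F with hI
  have hIcard : I.card = A.card := Finset.card_image_of_injOn hFinjA
  have hIsub : I ⊆ W.powerset := by
    intro s hs
    obtain ⟨a, ha, rfl⟩ := Finset.mem_image.1 hs
    exact Finset.mem_powerset.2 (hFW a ((hRmem a).1 (Finset.mem_filter.1 ha).1))
  set Tg : Finset (Finset V) := W.powerset \ I with hTg
  have hTgcard : Tg.card = 2 ^ W.card - A.card := by
    rw [hTg, Finset.card_sdiff_of_subset hIsub, Finset.card_powerset, hIcard]
  have hRcard : R.card = Fintype.card V - W.card := by
    rw [hR, Finset.card_sdiff_of_subset (Finset.subset_univ W), Finset.card_univ]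
  have hABcard : A.card + B.card = R.card := Finset.card_filter_add_card_filter_not _
  have hAle : A.card ≤ 2 ^ W.card := by
    calc A.card = I.card := hIcard.symm
      _ ≤ W.powerset.card := Finset.card_le_card hIsub
      _ = 2 ^ W.card := Finset.card_powerset W
  have hBle : B.card ≤ Tg.card := by rw [hTgcard]; omega
  obtain ⟨t, htsub, htcard⟩ := Finset.exists_subset_card_eq hBle
  have hcards : Fintype.card ↥B = Fintype.card ↥t := by
    rw [Fintype.card_coe, Fintype.card_coe, htcard]
  set e : ↥B ≃ ↥t := Fintype.equivOfCardEq hcards with he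
  set S : V → Finset V := fun v =>
    if hv : v ∈ B then (e ⟨v, hv⟩ : Finset V) else F v with hS
  have hSB : ∀ v ∈ B, S v ∈ t := by
    intro v hv
    simp only [hS, dif_pos hv]
    exact (e ⟨v, hv⟩).2
  have hSA : ∀ v ∉ B, S v = F v := by
    intro v hv; simp only [hS, dif_neg hv]
  have hmemA : ∀ v ∉ W, v ∉ B → v ∈ A := by
    intro v hv hvB
    rw [hA, Finset.mem_filter]
    refine ⟨(hRmem v).2 hv, ?_⟩
    by_contra hne
    exact hvB (Finset.mem_filter.2 ⟨(hRmem v).2 hv, hne⟩)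
  have hBempty : ∀ v ∈ B, F v = ∅ := by
    intro v hv
    exact Finset.not_nonempty_iff_eq_empty.1 (Finset.mem_filter.1 hv).2
  refine ⟨S, ?_, ?_⟩
  · intro v hv
    by_cases hvB : v ∈ B
    · have hSt := hSB v hvB
      have : S v ∈ W.powerset := (Finset.mem_sdiff.1 (htsub hSt)).1
      refine ⟨?_, Finset.mem_powerset.1 this⟩
      rw [hBempty v hvB]
      exact Finset.empty_subset _
    · rw [hSA v hvB]
      exact ⟨Finset.Subset.refl _, hFW v hv⟩
  · intro v₁ hv₁ v₂ hv₂ hSeq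
    by_cases h1 : v₁ ∈ B <;> by_cases h2 : v₂ ∈ B
    · have : e ⟨v₁, h1⟩ = e ⟨v₂, h2⟩ := by
        apply Subtype.ext
        have e1 : S v₁ = (e ⟨v₁, h1⟩ : Finset V) := by simp only [hS, dif_pos h1]
        have e2 : S v₂ = (e ⟨v₂, h2⟩ : Finset V) := by simp only [hS, dif_pos h2]
        rw [← e1, ← e2, hSeq]
      have := e.injective this
      exact congrArg Subtype.val this
    · exfalso
      have hA2 : v₂ ∈ A := hmemA v₂ hv₂ h2
      have hS2 : S v₂ = F v₂ := hSA v₂ h2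
      have hS2I : S v₂ ∈ I := by rw [hS2]; exact Finset.mem_image_of_mem F hA2
      have hS1t : S v₁ ∈ t := hSB v₁ h1
      have : S v₁ ∉ I := (Finset.mem_sdiff.1 (htsub hS1t)).2
      rw [hSeq] at this
      exact this hS2I
    · exfalso
      have hA1 : v₁ ∈ A := hmemA v₁ hv₁ h1
      have hS1 : S v₁ = F v₁ := hSA v₁ h1
      have hS1I : S v₁ ∈ I := by rw [hS1]; exact Finset.mem_image_of_mem F hA1
      have hS2t : S v₂ ∈ t := hSB v₂ h2
      have : S v₂ ∉ I := (Finset.mem_sdiff.1 (htsub hS2t)).2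
      rw [← hSeq] at this
      exact this hS1I
    · have hA1 : v₁ ∈ A := hmemA v₁ hv₁ h1
      have hA2 : v₂ ∈ A := hmemA v₂ hv₂ h2
      rw [hSA v₁ h1, hSA v₂ h2] at hSeq
      exact hFinjA hA1 hA2 hSeq

/-- For every tree of order `n ≥ 1`, `τ(T) ≤ g(n)`. -/
theorem tree_thresholdDim_le {V : Type*} [Fintype V] (T : SimpleGraph V) (hT : T.IsTree)
    (n : ℕ) (hn : 1 ≤ n) (hcard : Fintype.card V = n) :
    thresholdDim T ≤ gfun n := by
  classical
  set d : ℕ := gfun n with hdeq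
  have hdspec : n ≤ 2 ^ d + d := Nat.sInf_mem (⟨n, Nat.le_add_left n (2 ^ n)⟩ : Set.Nonempty {d | n ≤ 2 ^ d + d})
  have hdlen : d ≤ n := Nat.sInf_le (Nat.le_add_left n (2 ^ n))
  have hVne : Nonempty V := by
    rw [← Fintype.card_pos_iff, hcard]; omega
  obtain ⟨r⟩ := hVne
  -- choose the set W of d vertices farthest from r
  obtain ⟨W, hWcard, hWtop⟩ := exists_top_set (fun v => T.dist r v) d (by omega)
  -- forced neighbourhoods
  set F : V → Finset V := fun v => W.filter (fun w => T.Adj v w) with hF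
  have hFW : ∀ v ∉ W, F v ⊆ W := fun v _ => Finset.filter_subset _ _
  have hdisj : ∀ v₁ ∉ W, ∀ v₂ ∉ W, v₁ ≠ v₂ → Disjoint (F v₁) (F v₂) := by
    intro v₁ hv₁ v₂ hv₂ hne
    rw [Finset.disjoint_left]
    intro w hw1 hw2
    have h1 := Finset.mem_filter.1 hw1
    have h2 := Finset.mem_filter.1 hw2
    exact hne (tree_unique_down hT r w v₁ v₂ h1.2.symm h2.2.symm
      (hWtop v₁ hv₁ w h1.1) (hWtop v₂ hv₂ w h2.1))
  obtain ⟨S, hSprop, hSinj⟩ := exists_injective_assignment W F hFW hdisj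
    (by rw [hcard, hWcard]; omega)
  -- construct the supergraph H
  set H : SimpleGraph V :=
    { Adj := fun x y => T.Adj x y ∨ (x ∈ W ∧ y ∉ W ∧ x ∈ S y) ∨ (y ∈ W ∧ x ∉ W ∧ y ∈ S x)
      symm := by
        constructor
        rintro x y (h | h | h)
        · exact Or.inl h.symm
        · exact Or.inr (Or.inr h)
        · exact Or.inr (Or.inl h)
      loopless := by
        constructor
        rintro x (h | h | h)
        · exact T.irrefl h
        · exact h.2.1 h.1
        · exact h.2.1 h.1 } with hH
  have hTH : T ≤ H := by
    intro x y hxy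
    exact Or.inl hxy
  have hHconn : H.Connected := hT.isConnected.mono hTH
  have hadj_iff : ∀ v ∉ W, ∀ w ∈ W, (H.Adj w v ↔ w ∈ S v) := by
    intro v hv w hw
    constructor
    · rintro (h | h | h)
      · exact (hSprop v hv).1 (Finset.mem_filter.2 ⟨hw, h.symm⟩)
      · exact h.2.2
      · exact absurd h.1 hv
    · intro h
      exact Or.inr (Or.inl ⟨hw, hv, h⟩)
  have hres : IsResolvingSet H ↑W := by
    intro u v hdist
    by_cases hu : u ∈ W
    · have h0 : H.dist u v = 0 := by
        rw [← hdist u hu, SimpleGraph.dist_self]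
      exact hHconn.dist_eq_zero_iff.1 h0
    by_cases hv : v ∈ W
    · have h0 : H.dist v u = 0 := by
        rw [hdist v hv, SimpleGraph.dist_self]
      exact (hHconn.dist_eq_zero_iff.1 h0).symm
    apply hSinj u hu v hv
    ext w
    by_cases hw : w ∈ W
    · have h1 : H.Adj w u ↔ H.dist w u = 1 := (SimpleGraph.dist_eq_one_iff_adj).symm
      have h2 : H.Adj w v ↔ H.dist w v = 1 := (SimpleGraph.dist_eq_one_iff_adj).symm
      rw [← hadj_iff u hu w hw, ← hadj_iff v hv w hw, h1, h2, hdist w hw]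
    · constructor
      · intro h; exact absurd ((hSprop u hu).2 h) hw
      · intro h; exact absurd ((hSprop v hv).2 h) hw
  -- conclude
  have hmetric : metricDim H ≤ d := by
    apply Nat.sInf_le
    exact ⟨W, hWcard, hres⟩
  calc thresholdDim T ≤ metricDim H := Nat.sInf_le ⟨H, hTH, rfl⟩
    _ ≤ d := hmetric
end

section
/- For every n, the star K_{1,n−1} satisfies τ(K_{1,n−1}) = g(n), where g(n) is the least nonnegative integer d with 2^d + d ≥ n; in particular every graph of diameter 2 and order n has metric dimension at least g(n). -/
open SimpleGraph

lemma univ_resolving_s13 {V : Type*} [Fintype V] (H : SimpleGraph V) (hc : H.Connected) :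
    IsResolvingSet H (↑(Finset.univ : Finset V)) := by
  intro u v h
  have := h u (by simp)
  rw [SimpleGraph.dist_self] at this
  exact (hc.dist_eq_zero_iff.mp this.symm)

lemma lower_bound {V : Type*} [Fintype V] (H : SimpleGraph V) (hc : H.Connected)
    (h2 : ∀ u v : V, H.dist u v ≤ 2) : gfun (Fintype.card V) ≤ metricDim H := by
  classical
  have hne : {m | ∃ W : Finset V, W.card = m ∧ IsResolvingSet H ↑W}.Nonempty :=
    ⟨_, Finset.univ, rfl, univ_resolving_s13 H hc⟩
  obtain ⟨W, hWcard, hWres⟩ := Nat.sInf_mem hne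
  apply Nat.sInf_le
  show Fintype.card V ≤ 2 ^ metricDim H + metricDim H
  rw [show metricDim H = W.card from hWcard.symm]
  have key : (Wᶜ : Finset V).card ≤ 2 ^ W.card := by
    set g : V → (↥W → Fin 2) := fun u w => if H.dist ↑w u = 1 then 0 else 1 with hg
    have hinj : Set.InjOn g ↑(Wᶜ : Finset V) := by
      intro u hu v hv he
      simp only [Finset.coe_compl, Set.mem_compl_iff, Finset.mem_coe] at hu hv
      apply hWres
      intro w hw
      have h1 : H.dist w u ≤ 2 := h2 _ _
      have h2' : H.dist w v ≤ 2 := h2 _ _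
      have h3 : H.dist w u ≠ 0 := fun e => hu (hc.dist_eq_zero_iff.mp e ▸ hw)
      have h4 : H.dist w v ≠ 0 := fun e => hv (hc.dist_eq_zero_iff.mp e ▸ hw)
      have := congrFun he ⟨w, hw⟩
      simp only [hg] at this
      by_cases c1 : H.dist w u = 1 <;> by_cases c2 : H.dist w v = 1 <;>
        simp [c1, c2] at this ⊢ <;> omega
    calc (Wᶜ : Finset V).card ≤ (Finset.univ : Finset (↥W → Fin 2)).card :=
          Finset.card_le_card_of_injOn g (fun _ _ => Finset.mem_univ _) hinj
      _ = 2 ^ W.card := by simp [Finset.card_univ, Fintype.card_fun]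
  have := W.card_add_card_compl
  omega

section StarSup

variable {n : ℕ}

lemma star_adj_center (a : Fin 1) (j : Fin (n-1)) :
    (completeBipartiteGraph (Fin 1) (Fin (n - 1))).Adj (Sum.inl a) (Sum.inr j) := by simp

lemma sup_center_adj {H : SimpleGraph (Fin 1 ⊕ Fin (n-1))}
    (hle : completeBipartiteGraph (Fin 1) (Fin (n - 1)) ≤ H)
    (v : Fin 1 ⊕ Fin (n-1)) (hv : v ≠ Sum.inl 0) : H.Adj (Sum.inl 0) v := by
  match v with
  | Sum.inl a => exact absurd (by rw [Subsingleton.elim a 0]) hv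
  | Sum.inr j => exact hle (star_adj_center 0 j)

lemma sup_connected {H : SimpleGraph (Fin 1 ⊕ Fin (n-1))}
    (hle : completeBipartiteGraph (Fin 1) (Fin (n - 1)) ≤ H) : H.Connected := by
  rw [SimpleGraph.connected_iff_exists_forall_reachable]
  refine ⟨Sum.inl 0, fun v => ?_⟩
  by_cases hv : v = Sum.inl 0
  · exact hv ▸ SimpleGraph.Reachable.refl _
  · exact (sup_center_adj hle v hv).reachable

lemma sup_dist_le_two {H : SimpleGraph (Fin 1 ⊕ Fin (n-1))}
    (hle : completeBipartiteGraph (Fin 1) (Fin (n - 1)) ≤ H)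
    (u v : Fin 1 ⊕ Fin (n-1)) : H.dist u v ≤ 2 := by
  have hc := sup_connected hle
  have hd : ∀ w, H.dist (Sum.inl 0) w ≤ 1 := by
    intro w
    by_cases hw : w = Sum.inl 0
    · rw [hw, SimpleGraph.dist_self]; omega
    · exact le_of_eq (SimpleGraph.dist_eq_one_iff_adj.mpr (sup_center_adj hle w hw))
  calc H.dist u v ≤ H.dist u (Sum.inl 0) + H.dist (Sum.inl 0) v := hc.dist_triangle
    _ ≤ 1 + 1 := by
        rw [SimpleGraph.dist_comm]
        exact Nat.add_le_add (hd u) (hd v)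

/-- distance characterization in a supergraph of the star -/
lemma sup_dist_eq {H : SimpleGraph (Fin 1 ⊕ Fin (n-1))}
    (hle : completeBipartiteGraph (Fin 1) (Fin (n - 1)) ≤ H)
    {u v : Fin 1 ⊕ Fin (n-1)} (hne : u ≠ v) (hadj : ¬ H.Adj u v) : H.dist u v = 2 := by
  have h2 := sup_dist_le_two hle u v
  have h0 : H.dist u v ≠ 0 := fun e => hne ((sup_connected hle).dist_eq_zero_iff.mp e)
  have h1 : H.dist u v ≠ 1 := fun e => hadj (SimpleGraph.dist_eq_one_iff_adj.mp e)
  omega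

end StarSup

/-- construction: center plus d "landmark" vertices plus coded vertices -/
def consGraph (n d : ℕ) : SimpleGraph (Fin 1 ⊕ Fin (n-1)) where
  Adj x y := match x, y with
    | Sum.inl _, Sum.inl _ => False
    | Sum.inl _, Sum.inr _ => True
    | Sum.inr _, Sum.inl _ => True
    | Sum.inr i, Sum.inr j =>
        ((i:ℕ) < d ∧ d ≤ (j:ℕ) ∧ Nat.testBit ((j:ℕ) - d) (i:ℕ)) ∨
        ((j:ℕ) < d ∧ d ≤ (i:ℕ) ∧ Nat.testBit ((i:ℕ) - d) (j:ℕ))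
  symm := by constructor; rintro (a|i) (b|j) h <;> simp_all <;> tauto
  loopless := by constructor; rintro (a|i) h <;> simp_all <;> omega

lemma star_le_consGraph (n d : ℕ) :
    completeBipartiteGraph (Fin 1) (Fin (n - 1)) ≤ consGraph n d := by
  rintro (a|i) (b|j) h <;> simp_all [consGraph]

lemma consGraph_adj_inl_inr (n d : ℕ) (a : Fin 1) (j : Fin (n-1)) :
    (consGraph n d).Adj (Sum.inr j) (Sum.inl a) := by simp [consGraph]

lemma consGraph_adj_inr_inr (n d : ℕ) (i j : Fin (n-1)) (hi : (i:ℕ) < d) (hj : d ≤ (j:ℕ)) :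
    (consGraph n d).Adj (Sum.inr i) (Sum.inr j) ↔ Nat.testBit ((j:ℕ) - d) (i:ℕ) := by
  show (_ ∨ _) ↔ _
  constructor
  · rintro (⟨_, _, h⟩ | ⟨h1, h2, _⟩)
    · exact h
    · omega
  · intro h; exact Or.inl ⟨hi, hj, h⟩

lemma testbit_high {m d i : ℕ} (hm : m < 2^d) (hi : d ≤ i) : Nat.testBit m i = false :=
  Nat.testBit_eq_false_of_lt (lt_of_lt_of_le hm (Nat.pow_le_pow_right (by norm_num) hi))

def Wcons (n d : ℕ) (h : d ≤ n - 1) : Finset (Fin 1 ⊕ Fin (n-1)) :=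
  (Finset.univ : Finset (Fin d)).image (fun i => Sum.inr (Fin.castLE h i))

lemma Wcons_card (n d : ℕ) (h : d ≤ n - 1) : (Wcons n d h).card = d := by
  rw [Wcons, Finset.card_image_of_injective _
    (fun a b hab => (Fin.castLE_injective h) (Sum.inr_injective hab)),
    Finset.card_univ, Fintype.card_fin]

lemma mem_Wcons_inr (n d : ℕ) (h : d ≤ n - 1) (j : Fin (n-1)) :
    Sum.inr j ∈ Wcons n d h ↔ (j:ℕ) < d := by
  simp only [Wcons, Finset.mem_image, Finset.mem_univ, true_and]
  constructor
  · rintro ⟨i, hi⟩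
    have : (j : ℕ) = (i : ℕ) := by
      have := congrArg (fun x => match x with | Sum.inr y => (y:ℕ) | Sum.inl _ => 0) hi
      simpa using this.symm
    omega
  · intro hj; exact ⟨⟨(j:ℕ), hj⟩, by simp [Fin.ext_iff]⟩

lemma not_mem_Wcons_inl (n d : ℕ) (h : d ≤ n - 1) (a : Fin 1) :
    Sum.inl a ∉ Wcons n d h := by
  simp [Wcons]

lemma cons_resolving (n d : ℕ) (hd : n ≤ 2^d + d) (hdn : d ≤ n - 1) (hn : 1 ≤ n) :
    IsResolvingSet (consGraph n d) ↑(Wcons n d hdn) := by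
  have hle := star_le_consGraph n d
  have hc := sup_connected hle
  intro u v hdist
  -- if u is a landmark
  by_cases hu : u ∈ Wcons n d hdn
  · have := hdist u hu
    rw [SimpleGraph.dist_self] at this
    exact hc.dist_eq_zero_iff.mp this.symm
  by_cases hv : v ∈ Wcons n d hdn
  · have := hdist v hv
    rw [SimpleGraph.dist_self] at this
    exact (hc.dist_eq_zero_iff.mp this).symm
  -- adjacency to each landmark is determined
  have hA : ∀ i : Fin (n-1), (i:ℕ) < d →
      ((consGraph n d).Adj (Sum.inr i) u ↔ (consGraph n d).Adj (Sum.inr i) v) := by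
    intro i hi
    have hwmem : Sum.inr i ∈ Wcons n d hdn := (mem_Wcons_inr n d hdn i).mpr hi
    have hdw := hdist (Sum.inr i) hwmem
    have hneu : Sum.inr i ≠ u := fun e => hu (e ▸ hwmem)
    have hnev : Sum.inr i ≠ v := fun e => hv (e ▸ hwmem)
    constructor
    · intro hadj
      by_contra hnadj
      have e1 : (consGraph n d).dist (Sum.inr i) u = 1 :=
        SimpleGraph.dist_eq_one_iff_adj.mpr hadj
      have e2 := sup_dist_eq hle hnev hnadj
      omega
    · intro hadj
      by_contra hnadj
      have e1 : (consGraph n d).dist (Sum.inr i) v = 1 :=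
        SimpleGraph.dist_eq_one_iff_adj.mpr hadj
      have e2 := sup_dist_eq hle hneu hnadj
      omega
  -- helper: from "adjacent to all landmarks" and a non-landmark inr, contradiction
  have key : ∀ j : Fin (n-1), d ≤ (j:ℕ) →
      ¬ (∀ i : ℕ, i < d → Nat.testBit ((j:ℕ) - d) i = true) := by
    intro j hj hall
    have hn2 : 1 ≤ n - 1 := by omega
    have hd1 : 1 ≤ d := by
      rcases Nat.eq_zero_or_pos d with h0 | h1
      · subst h0; simp at hd; omega
      · exact h1
    have h2d : 2 ≤ 2^d := by
      calc 2 = 2^1 := by norm_num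
        _ ≤ 2^d := Nat.pow_le_pow_right (by norm_num) hd1
    have hjlt : (j:ℕ) < n - 1 := j.isLt
    have hm : (j:ℕ) - d ≤ 2^d - 2 := by omega
    have : (j:ℕ) - d = 2^d - 1 := by
      apply Nat.eq_of_testBit_eq
      intro i
      rcases lt_or_ge i d with hid | hid
      · rw [hall i hid, Nat.testBit_two_pow_sub_one]
        simp [hid]
      · rw [testbit_high (by omega) hid, Nat.testBit_two_pow_sub_one]
        simp; omega
    omega
  -- case analysis
  match u, v with
  | Sum.inl a, Sum.inl b => rw [Subsingleton.elim a b]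
  | Sum.inl a, Sum.inr j =>
      exfalso
      have hj : d ≤ (j:ℕ) := by
        by_contra h
        exact hv ((mem_Wcons_inr n d hdn j).mpr (by omega))
      apply key j hj
      intro i hi
      have hin : i < n - 1 := by omega
      have := (hA ⟨i, hin⟩ hi).mp (consGraph_adj_inl_inr n d a ⟨i, hin⟩).symm
      rw [consGraph_adj_inr_inr n d ⟨i, hin⟩ j hi hj] at this
      exact this
  | Sum.inr j, Sum.inl a =>
      exfalso
      have hj : d ≤ (j:ℕ) := by
        by_contra h
        exact hu ((mem_Wcons_inr n d hdn j).mpr (by omega))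
      apply key j hj
      intro i hi
      have hin : i < n - 1 := by omega
      have := (hA ⟨i, hin⟩ hi).mpr (consGraph_adj_inl_inr n d a ⟨i, hin⟩).symm
      rw [consGraph_adj_inr_inr n d ⟨i, hin⟩ j hi hj] at this
      exact this
  | Sum.inr j, Sum.inr j' =>
      have hj : d ≤ (j:ℕ) := by
        by_contra h
        exact hu ((mem_Wcons_inr n d hdn j).mpr (by omega))
      have hj' : d ≤ (j':ℕ) := by
        by_contra h
        exact hv ((mem_Wcons_inr n d hdn j').mpr (by omega))
      have hd1 : 1 ≤ d ∨ d = 0 := by omega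
      have h2d : (j:ℕ) - d < 2^d ∧ (j':ℕ) - d < 2^d := by
        have h1 := j.isLt
        have h2 := j'.isLt
        have : 1 ≤ 2^d := Nat.one_le_two_pow
        omega
      have : (j:ℕ) - d = (j':ℕ) - d := by
        apply Nat.eq_of_testBit_eq
        intro i
        rcases lt_or_ge i d with hid | hid
        · have hin : i < n - 1 := by omega
          have := hA ⟨i, hin⟩ hid
          rw [consGraph_adj_inr_inr n d ⟨i, hin⟩ j hid hj,
            consGraph_adj_inr_inr n d ⟨i, hin⟩ j' hid hj'] at this
          rw [Bool.eq_iff_iff]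
          exact this
        · rw [testbit_high h2d.1 hid, testbit_high h2d.2 hid]
      have : (j:ℕ) = (j':ℕ) := by omega
      rw [Sum.inr.injEq]
      exact Fin.ext this

/-- `τ(K_{1,n-1}) = g(n)`; in particular every connected graph of diameter `2` and order
`n` has metric dimension at least `g(n)`. -/
theorem star_thresholdDim (n : ℕ) (hn : 1 ≤ n) :
    thresholdDim (completeBipartiteGraph (Fin 1) (Fin (n - 1))) = gfun n ∧
    ∀ (V : Type) [Fintype V] (H : SimpleGraph V), Fintype.card V = n →
      H.Connected → H.diam = 2 → gfun n ≤ metricDim H := by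
  have hgd : n ≤ 2 ^ (gfun n) + gfun n := by
    have : gfun n ∈ {d | n ≤ 2 ^ d + d} :=
      Nat.sInf_mem ⟨n, show n ≤ 2 ^ n + n from Nat.le_add_left n _⟩
    exact this
  have hdn : gfun n ≤ n - 1 := Nat.sInf_le (by
    have h1 : 1 ≤ 2^(n-1) := Nat.one_le_two_pow
    show n ≤ 2^(n-1) + (n-1)
    omega)
  have hcard : Fintype.card (Fin 1 ⊕ Fin (n-1)) = n := by
    simp only [Fintype.card_sum, Fintype.card_fin]
    omega
  constructor
  · apply le_antisymm
    · have h1 : metricDim (consGraph n (gfun n)) ≤ gfun n :=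
        Nat.sInf_le ⟨Wcons n (gfun n) hdn, Wcons_card n (gfun n) hdn,
          cons_resolving n (gfun n) hgd hdn hn⟩
      have h2 : thresholdDim (completeBipartiteGraph (Fin 1) (Fin (n - 1))) ≤
          metricDim (consGraph n (gfun n)) :=
        Nat.sInf_le ⟨consGraph n (gfun n), star_le_consGraph n (gfun n), rfl⟩
      exact le_trans h2 h1
    · refine le_csInf ⟨metricDim (consGraph n (gfun n)),
          consGraph n (gfun n), star_le_consGraph n (gfun n), rfl⟩ ?_
      rintro m ⟨H, hle, rfl⟩
      have := lower_bound H (sup_connected hle) (sup_dist_le_two hle)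
      rwa [hcard] at this
  · intro V _ H hc hconn hdiam
    have hnt : H.ediam ≠ ⊤ := by
      intro h
      rw [SimpleGraph.diam, h] at hdiam
      simp at hdiam
    have h2 : ∀ u v : V, H.dist u v ≤ 2 := fun u v => hdiam ▸ SimpleGraph.dist_le_diam hnt
    exact hc ▸ lower_bound H hconn h2
end

section
/- For every integer b > 2, there exists a tree T with β(T) = b and τ(T) = 2. Specifically, the caterpillar L_{3n} obtained from the path P_n by attaching two leaves to each path vertex satisfies β(L_{3n}) = n and τ(L_{3n}) = 2. -/
open SimpleGraph

/-- The caterpillar `L_{3n}`: a path `v 0, …, v (n-1)` with two pendant leaves attached to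
each path vertex. -/
def caterpillar (n : ℕ) : SimpleGraph (Fin n ⊕ Fin n × Fin 2) :=
  SimpleGraph.fromRel fun x y =>
    match x, y with
    | Sum.inl i, Sum.inl j => (i : ℕ) + 1 = (j : ℕ)
    | Sum.inl i, Sum.inr p => i = p.1
    | _, _ => False


/-- No walk crosses a set closed under adjacency. -/
lemma noReach {V : Type*} {G : SimpleGraph V} (S : Set V)
    (hS : ∀ a b, G.Adj a b → (a ∈ S ↔ b ∈ S)) {x y : V} (hx : x ∈ S) (hy : y ∉ S) :
    ¬ G.Reachable x y := by
  rintro ⟨p⟩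
  apply hy
  clear hy
  induction p with
  | nil => exact hx
  | cons h q ih => exact ih ((hS _ _ h).mp hx)

lemma grade_dist {V : Type*} (G : SimpleGraph V) (w : V) (f : V → ℕ)
    (h0 : f w = 0)
    (hlip : ∀ u v, G.Adj u v → f v ≤ f u + 1)
    (hdown : ∀ v, v ≠ w → ∃ u, G.Adj u v ∧ f u + 1 = f v) :
    (∀ v, G.Reachable w v) ∧ (∀ v, G.dist w v = f v) := by
  have hreach : ∀ m (v : V), f v ≤ m → G.Reachable w v := by
    intro m
    induction m with
    | zero =>
      intro v hv
      by_cases hvw : v = w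
      · subst hvw; exact Reachable.refl _
      · obtain ⟨u, _, hu⟩ := hdown v hvw; omega
    | succ m ih =>
      intro v hv
      by_cases hvw : v = w
      · subst hvw; exact Reachable.refl _
      · obtain ⟨u, hadj, hu⟩ := hdown v hvw
        exact (ih u (by omega)).trans hadj.reachable
  have hub : ∀ m (v : V), f v ≤ m → G.dist w v ≤ f v := by
    intro m
    induction m with
    | zero =>
      intro v hv
      by_cases hvw : v = w
      · subst hvw; simp [SimpleGraph.dist_self, h0]
      · obtain ⟨u, _, hu⟩ := hdown v hvw; omega
    | succ m ih =>
      intro v hv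
      by_cases hvw : v = w
      · subst hvw; simp [SimpleGraph.dist_self, h0]
      · obtain ⟨u, hadj, hu⟩ := hdown v hvw
        obtain ⟨p, hp⟩ := (hreach (f u) u le_rfl).exists_walk_length_eq_dist
        have := SimpleGraph.dist_le (p.concat hadj)
        rw [SimpleGraph.Walk.length_concat, hp] at this
        have := ih u (by omega)
        omega
  have hlb : ∀ (u v : V) (p : G.Walk u v), f v ≤ f u + p.length := by
    intro u v p
    induction p with
    | nil => simp
    | cons h q ih =>
      have := hlip _ _ h
      simp only [SimpleGraph.Walk.length_cons]
      omega
  refine ⟨fun v => hreach (f v) v le_rfl, fun v => le_antisymm (hub (f v) v le_rfl) ?_⟩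
  obtain ⟨p, hp⟩ := (hreach (f v) v le_rfl).exists_walk_length_eq_dist
  have := hlb w v p
  omega

lemma sInf_eq_of {S : Set ℕ} {k : ℕ} (hmem : k ∈ S) (hlb : ∀ m ∈ S, k ≤ m) : sInf S = k :=
  le_antisymm (Nat.sInf_le hmem) (le_csInf ⟨k, hmem⟩ hlb)
def nd (a b : ℕ) : ℕ := a - b + (b - a)

noncomputable def catf {n : ℕ} (w v : Fin n ⊕ Fin n × Fin 2) : ℕ :=
  match w, v with
  | .inl k, .inl j => nd k j
  | .inl k, .inr q => nd k q.1 + 1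
  | .inr p, .inl j => nd p.1 j + 1
  | .inr p, .inr q => if q = p then 0 else nd p.1 q.1 + 2

lemma cat_adj_iff {n : ℕ} (x y : Fin n ⊕ Fin n × Fin 2) :
    (caterpillar n).Adj x y ↔
      (∃ i j : Fin n, ((i:ℕ)+1 = j ∨ (j:ℕ)+1 = i) ∧ x = .inl i ∧ y = .inl j) ∨
      (∃ (i : Fin n) (s : Fin 2), (x = .inl i ∧ y = .inr (i,s)) ∨ (x = .inr (i,s) ∧ y = .inl i)) := by
  rw [caterpillar, fromRel_adj]
  constructor
  · rintro ⟨hne, h | h⟩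
    · rcases x with i | p <;> rcases y with j | q
      · exact Or.inl ⟨i, j, Or.inl h, rfl, rfl⟩
      · refine Or.inr ⟨q.1, q.2, Or.inl ⟨?_, by simp⟩⟩
        have h' : i = q.1 := h
        rw [h']
      · exact absurd h id
      · exact absurd h id
    · rcases x with i | p <;> rcases y with j | q
      · exact Or.inl ⟨i, j, Or.inr h, rfl, rfl⟩
      · exact absurd h id
      · have h' : j = p.1 := h
        exact Or.inr ⟨p.1, p.2, Or.inr ⟨by simp, by rw [h']⟩⟩
      · exact absurd h id
  · rintro (⟨i, j, h, rfl, rfl⟩ | ⟨i, s, ⟨rfl, rfl⟩ | ⟨rfl, rfl⟩⟩)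
    · exact ⟨by simp [Fin.ext_iff]; omega, h.imp (fun h => h) (fun h => h)⟩
    · exact ⟨by simp, Or.inl rfl⟩
    · exact ⟨by simp, Or.inr rfl⟩

lemma catP {n : ℕ} {i j : Fin n} (h : (i:ℕ)+1 = j) : (caterpillar n).Adj (.inl i) (.inl j) :=
  (cat_adj_iff _ _).mpr (Or.inl ⟨i, j, Or.inl h, rfl, rfl⟩)

lemma catL {n : ℕ} (i : Fin n) (s : Fin 2) : (caterpillar n).Adj (.inl i) (.inr (i,s)) :=
  (cat_adj_iff _ _).mpr (Or.inr ⟨i, s, Or.inl ⟨rfl, rfl⟩⟩)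

lemma catL' {n : ℕ} (q : Fin n × Fin 2) : (caterpillar n).Adj (.inl q.1) (.inr q) := by
  obtain ⟨a, b⟩ := q; exact catL a b

lemma cat_dist {n : ℕ} (w : Fin n ⊕ Fin n × Fin 2) :
    (∀ v, (caterpillar n).Reachable w v) ∧ (∀ v, (caterpillar n).dist w v = catf w v) := by
  apply grade_dist
  · rcases w with k | p <;> simp [catf, nd]
  · -- hlip
    intro u v huv
    rcases (cat_adj_iff u v).mp huv with ⟨i, j, hij, rfl, rfl⟩ | ⟨i, s, ⟨rfl, rfl⟩ | ⟨rfl, rfl⟩⟩ <;>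
        rcases w with k | p
    · simp only [catf, nd]; omega
    · simp only [catf, nd]; omega
    · simp only [catf, nd]; omega
    · by_cases hc : (i, s) = p
      · subst hc; simp [catf, nd]
      · simp only [catf, nd, if_neg hc]; omega
    · simp only [catf, nd]; omega
    · by_cases hc : (i, s) = p
      · subst hc; simp [catf, nd]
      · simp only [catf, nd, if_neg hc]; omega
  · -- hdown
    intro v hvw
    rcases v with j | q
    · rcases w with k | p
      · have hkj : (k:ℕ) ≠ (j:ℕ) := fun h => hvw (by simp [Fin.ext_iff, h.symm])
        by_cases h : (j:ℕ) < (k:ℕ)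
        · refine ⟨Sum.inl ⟨j+1, by omega⟩, (catP (i := j) (by simp)).symm, ?_⟩
          simp only [catf, nd, Fin.val_mk]; omega
        · refine ⟨Sum.inl ⟨j-1, by omega⟩, catP (by simp; omega), ?_⟩
          simp only [catf, nd, Fin.val_mk]; omega
      · by_cases h : p.1 = j
        · refine ⟨Sum.inr p, (h ▸ catL' p).symm, ?_⟩
          simp [catf, nd, h]
        · have hne : (p.1:ℕ) ≠ (j:ℕ) := fun hh => h (Fin.ext hh)
          by_cases h2 : (j:ℕ) < (p.1:ℕ)
          · refine ⟨Sum.inl ⟨j+1, by omega⟩, (catP (i := j) (by simp)).symm, ?_⟩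
            simp only [catf, nd, Fin.val_mk]; omega
          · refine ⟨Sum.inl ⟨j-1, by omega⟩, catP (by simp; omega), ?_⟩
            simp only [catf, nd, Fin.val_mk]; omega
    · refine ⟨Sum.inl q.1, catL' q, ?_⟩
      rcases w with k | p
      · simp only [catf, nd]
      · have hq : q ≠ p := fun h => hvw (by rw [h])
        simp only [catf, nd, if_neg hq]
def cx {n : ℕ} : Fin n ⊕ Fin n × Fin 2 → ℕ := Sum.elim (·.val) (fun p => p.1.val)
def cy {n : ℕ} : Fin n ⊕ Fin n × Fin 2 → ℕ :=
  Sum.elim (fun _ => 1) (fun p => if p.2 = 0 then 0 else 2)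

/-- The `n × 3` grid graph, drawn on the vertex set of the caterpillar. -/
def gridH (n : ℕ) : SimpleGraph (Fin n ⊕ Fin n × Fin 2) where
  Adj x y := nd (cx x) (cx y) + nd (cy x) (cy y) = 1
  symm := by constructor; intro x y h; simp only [nd] at *; omega
  loopless := by constructor; intro x h; simp only [nd] at h; omega

lemma cx_lt {n : ℕ} (v : Fin n ⊕ Fin n × Fin 2) : cx v < n := by
  rcases v with j | q <;> simp [cx]

lemma cy_le {n : ℕ} (v : Fin n ⊕ Fin n × Fin 2) : cy v ≤ 2 := by
  rcases v with j | q <;> simp [cy]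
  split <;> omega

lemma coords_inj {n : ℕ} {u v : Fin n ⊕ Fin n × Fin 2} (hx : cx u = cx v) (hy : cy u = cy v) :
    u = v := by
  rcases u with j | q <;> rcases v with j' | q' <;>
    simp only [cx, cy, Sum.elim_inl, Sum.elim_inr] at hx hy
  · simp [Fin.ext_iff, hx]
  · split at hy <;> omega
  · split at hy <;> omega
  · split at hy <;> split at hy <;> try omega
    · have : q.2 = q'.2 := by rename_i h1 h2; rw [h1, h2]
      simp [Prod.ext_iff, Fin.ext_iff, hx, this]
    · have h2 : (q.2:ℕ) ≠ 0 := by rename_i h1 h2; exact fun h0 => h1 (Fin.ext h0)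
      have h3 : (q'.2:ℕ) ≠ 0 := by rename_i h1 h2'; exact fun h0 => h2' (Fin.ext h0)
      have : q.2 = q'.2 := by omega
      simp [Prod.ext_iff, Fin.ext_iff, hx, this]

/-- Realize a vertex from coordinates. -/
def vmk {n : ℕ} (a : Fin n) (y : ℕ) : Fin n ⊕ Fin n × Fin 2 :=
  if y = 0 then .inr (a, 0) else if y = 1 then .inl a else .inr (a, 1)

lemma cx_vmk {n : ℕ} (a : Fin n) (y : ℕ) : cx (vmk a y) = a := by
  unfold vmk; split <;> [skip; split] <;> simp [cx]

lemma cy_vmk {n : ℕ} (a : Fin n) (y : ℕ) (hy : y ≤ 2) : cy (vmk a y) = y := by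
  unfold vmk; split <;> [skip; split] <;> simp [cy] <;> omega

def fidx {n : ℕ} : Fin n ⊕ Fin n × Fin 2 → Fin n := Sum.elim id Prod.fst

lemma cx_fidx {n : ℕ} (v : Fin n ⊕ Fin n × Fin 2) : (fidx v : ℕ) = cx v := by
  rcases v with j | q <;> simp [fidx, cx]

lemma gridH_adj {n : ℕ} {x y : Fin n ⊕ Fin n × Fin 2} :
    (gridH n).Adj x y ↔ nd (cx x) (cx y) + nd (cy x) (cy y) = 1 := Iff.rfl

lemma cat_le_gridH {n : ℕ} : caterpillar n ≤ gridH n := by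
  intro x y h
  rcases (cat_adj_iff x y).mp h with ⟨i, j, hij, rfl, rfl⟩ | ⟨i, s, ⟨rfl, rfl⟩ | ⟨rfl, rfl⟩⟩ <;>
    show nd _ _ + nd _ _ = 1 <;> simp only [cx, cy, nd, Sum.elim_inl, Sum.elim_inr] <;>
    (try split) <;> omega

lemma grid_dist {n : ℕ} (w : Fin n ⊕ Fin n × Fin 2) :
    (∀ v, (gridH n).Reachable w v) ∧
      (∀ v, (gridH n).dist w v = nd (cx w) (cx v) + nd (cy w) (cy v)) := by
  apply grade_dist
  · simp [nd]
  · intro u v huv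
    have h : nd (cx u) (cx v) + nd (cy u) (cy v) = 1 := huv
    simp only [nd] at *; omega
  · intro v hvw
    have hv2 := cy_le v; have hw2 := cy_le w; have hv1 := cx_lt v; have hw1 := cx_lt w
    by_cases hx : cx v = cx w
    · have hy : cy v ≠ cy w := fun hy => hvw (coords_inj hx hy)
      by_cases hlt : cy v < cy w
      · refine ⟨vmk (fidx v) (cy v + 1), ?_, ?_⟩
        · rw [gridH_adj, cx_vmk, cy_vmk _ _ (by omega), cx_fidx]; simp only [nd]; omega
        · rw [cx_vmk, cy_vmk _ _ (by omega), cx_fidx]; simp only [nd]; omega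
      · refine ⟨vmk (fidx v) (cy v - 1), ?_, ?_⟩
        · rw [gridH_adj, cx_vmk, cy_vmk _ _ (by omega), cx_fidx]; simp only [nd]; omega
        · rw [cx_vmk, cy_vmk _ _ (by omega), cx_fidx]; simp only [nd]; omega
    · by_cases hlt : cx v < cx w
      · refine ⟨vmk ⟨cx v + 1, by omega⟩ (cy v), ?_, ?_⟩
        · rw [gridH_adj, cx_vmk, cy_vmk _ _ (by omega)]; simp only [nd, Fin.val_mk]; omega
        · rw [cx_vmk, cy_vmk _ _ (by omega)]; simp only [nd, Fin.val_mk]; omega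
      · refine ⟨vmk ⟨cx v - 1, by omega⟩ (cy v), ?_, ?_⟩
        · rw [gridH_adj, cx_vmk, cy_vmk _ _ (by omega)]; simp only [nd, Fin.val_mk]; omega
        · rw [cx_vmk, cy_vmk _ _ (by omega)]; simp only [nd, Fin.val_mk]; omega
open SimpleGraph

lemma cat_resolving {n : ℕ} :
    IsResolvingSet (caterpillar n)
      ↑(Finset.image (fun i : Fin n => (Sum.inr (i, (0 : Fin 2)) : Fin n ⊕ Fin n × Fin 2))
          Finset.univ) := by
  intro u v h
  have h' : ∀ i : Fin n, catf (Sum.inr (i, (0:Fin 2))) u = catf (Sum.inr (i, 0)) v := by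
    intro i
    have := h (Sum.inr (i, 0)) (by simp)
    rwa [(cat_dist _).2, (cat_dist _).2] at this
  rcases u with j | q <;> rcases v with j' | q'
  · have h1 := h' j
    have h2 := h' j'
    simp only [catf, nd] at h1 h2
    have : (j : ℕ) = (j' : ℕ) := by omega
    simp [Fin.ext_iff, this]
  · have h1 := h' j
    simp only [catf, nd] at h1
    split at h1 <;> omega
  · have h1 := h' j'
    simp only [catf, nd] at h1
    split at h1 <;> omega
  · obtain ⟨a, s⟩ := q
    obtain ⟨b, t⟩ := q'
    have ha := h' a
    simp only [catf, nd] at ha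
    by_cases hs : s = (0 : Fin 2)
    · subst hs
      rw [if_pos rfl] at ha
      split at ha
      · rename_i hcond
        rw [← hcond]
      · omega
    · rw [if_neg (by simp [Prod.ext_iff]; tauto)] at ha
      split at ha
      · omega
      · rename_i hcond
        have hab : (a : ℕ) = (b : ℕ) := by omega
        have hab' : a = b := Fin.ext hab
        have ht : t ≠ (0 : Fin 2) := by
          intro h0
          exact hcond (by simp [Prod.ext_iff, hab'.symm, h0])
        have : s = t := by omega
        rw [hab', this]

lemma cat_card_lb {n : ℕ} (W : Finset (Fin n ⊕ Fin n × Fin 2))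
    (hres : IsResolvingSet (caterpillar n) ↑W) : n ≤ W.card := by
  classical
  have key : ∀ i : Fin n, ∃ t : Fin 2, Sum.inr (i, t) ∈ W := by
    intro i
    by_contra hc
    push_neg at hc
    have heq : (Sum.inr (i, (0:Fin 2)) : Fin n ⊕ Fin n × Fin 2) = Sum.inr (i, (1:Fin 2)) := by
      apply hres
      intro w hw
      rw [(cat_dist w).2, (cat_dist w).2]
      rcases w with k | p
      · rfl
      · have hp0 : (i, (0:Fin 2)) ≠ p := fun hp => hc 0 (by rw [hp]; exact hw)
        have hp1 : (i, (1:Fin 2)) ≠ p := fun hp => hc 1 (by rw [hp]; exact hw)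
        simp only [catf, if_neg hp0, if_neg hp1]
    simp at heq
  let g : Fin n → Fin n ⊕ Fin n × Fin 2 := fun i => Sum.inr (i, (key i).choose)
  have hmem : ∀ i ∈ Finset.univ, g i ∈ W := fun i _ => (key i).choose_spec
  have hinj : Set.InjOn g ↑(Finset.univ : Finset (Fin n)) := by
    intro a _ b _ hab
    have : (a, (key a).choose) = (b, (key b).choose) := Sum.inr.inj hab
    exact (Prod.ext_iff.mp this).1
  have := Finset.card_le_card_of_injOn g hmem hinj
  simpa using this

lemma metricDim_cat {n : ℕ} : metricDim (caterpillar n) = n := by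
  apply sInf_eq_of
  · refine ⟨_, ?_, cat_resolving⟩
    rw [Finset.card_image_of_injective _ (fun a b hab => by simpa using hab)]
    simp
  · rintro m ⟨W, rfl, hres⟩
    exact cat_card_lb W hres

lemma two_le_resolving {n : ℕ} (hn : 2 < n) (H : SimpleGraph (Fin n ⊕ Fin n × Fin 2))
    (hH : caterpillar n ≤ H) (W : Finset (Fin n ⊕ Fin n × Fin 2))
    (hres : IsResolvingSet H ↑W) : 2 ≤ W.card := by
  by_contra hcard
  push_neg at hcard
  have : W.card = 0 ∨ W.card = 1 := by omega
  rcases this with h0 | h1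
  · rw [Finset.card_eq_zero] at h0
    have := hres (Sum.inr (⟨0, by omega⟩, 0)) (Sum.inr (⟨0, by omega⟩, 1))
      (by intro w hw; rw [h0] at hw; simp at hw)
    simp at this
  · obtain ⟨w, hW⟩ := Finset.card_eq_one.mp h1
    have hr : ∀ u v, H.dist w u = H.dist w v → u = v := by
      intro u v h
      apply hres
      intro x hx
      rw [hW] at hx
      simp at hx
      subst hx
      exact h
    have hreach : ∀ u, H.Reachable w u := by
      intro u
      by_contra hru
      have hd : H.dist w u = 0 := dist_eq_zero_of_not_reachable hru
      have : u = w := hr u w (by rw [hd, SimpleGraph.dist_self])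
      rw [this] at hru
      exact hru (Reachable.refl w)
    have key : ∀ y z, H.Adj y z → H.dist w z ≤ H.dist w y + 1 := by
      intro y z hyz
      obtain ⟨p, hp⟩ := (hreach y).exists_walk_length_eq_dist
      have := SimpleGraph.dist_le (p.concat hyz)
      rwa [SimpleGraph.Walk.length_concat, hp] at this
    set i0 : Fin n := ⟨0, by omega⟩
    set i1 : Fin n := ⟨1, by omega⟩
    have ha : H.Adj (Sum.inl i0) (Sum.inl i1) := hH (catP (by simp [i0, i1]))
    have hb : H.Adj (Sum.inl i0) (Sum.inr (i0, 0)) := hH (catL i0 0)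
    have hc : H.Adj (Sum.inl i0) (Sum.inr (i0, 1)) := hH (catL i0 1)
    have d1 := key _ _ ha
    have d1' := key _ _ ha.symm
    have d2 := key _ _ hb
    have d2' := key _ _ hb.symm
    have d3 := key _ _ hc
    have d3' := key _ _ hc.symm
    have n1 : H.dist w (Sum.inl i1) ≠ H.dist w (Sum.inl i0) := by
      intro h; have := hr _ _ h; simp [i0, i1, Fin.ext_iff] at this
    have n2 : H.dist w (Sum.inr (i0, 0)) ≠ H.dist w (Sum.inl i0) := by
      intro h; have := hr _ _ h; simp at this
    have n3 : H.dist w (Sum.inr (i0, 1)) ≠ H.dist w (Sum.inl i0) := by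
      intro h; have := hr _ _ h; simp at this
    have n12 : H.dist w (Sum.inl i1) ≠ H.dist w (Sum.inr (i0, 0)) := by
      intro h; have := hr _ _ h; simp at this
    have n13 : H.dist w (Sum.inl i1) ≠ H.dist w (Sum.inr (i0, 1)) := by
      intro h; have := hr _ _ h; simp at this
    have n23 : H.dist w (Sum.inr (i0, 0)) ≠ H.dist w (Sum.inr (i0, 1)) := by
      intro h; have := hr _ _ h; simp at this
    omega

lemma grid_resolving {n : ℕ} (a b : Fin n) (ha : (a:ℕ) = 0) (hb : (b:ℕ) = n-1) :
    IsResolvingSet (gridH n)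
      ↑({Sum.inr (a, 0), Sum.inr (b, 0)} : Finset (Fin n ⊕ Fin n × Fin 2)) := by
  intro u v h
  have h1 := h (Sum.inr (a, 0)) (by simp)
  have h2 := h (Sum.inr (b, 0)) (by simp)
  rw [(grid_dist _).2, (grid_dist _).2] at h1 h2
  have e1 : cx (Sum.inr (a, (0:Fin 2))) = (a:ℕ) := rfl
  have e2 : cy (Sum.inr (a, (0:Fin 2))) = 0 := rfl
  have e3 : cx (Sum.inr (b, (0:Fin 2))) = (b:ℕ) := rfl
  have e4 : cy (Sum.inr (b, (0:Fin 2))) = 0 := rfl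
  rw [e1, e2] at h1
  rw [e3, e4] at h2
  rw [ha] at h1
  rw [hb] at h2
  simp only [nd] at h1 h2
  have hu1 := cx_lt u; have hv1 := cx_lt v; have hu2 := cy_le u; have hv2 := cy_le v
  exact coords_inj (by omega) (by omega)

lemma metricDim_grid {n : ℕ} (hn : 2 < n) : metricDim (gridH n) = 2 := by
  apply sInf_eq_of
  · refine ⟨_, ?_, grid_resolving (⟨0, by omega⟩ : Fin n) ⟨n-1, by omega⟩ rfl rfl⟩
    rw [Finset.card_insert_of_notMem (by simp [Prod.ext_iff, Fin.ext_iff]; omega)]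
    simp
  · rintro m ⟨W, rfl, hres⟩
    exact two_le_resolving hn _ cat_le_gridH W hres

lemma thresholdDim_cat {n : ℕ} (hn : 2 < n) : thresholdDim (caterpillar n) = 2 := by
  apply sInf_eq_of
  · exact ⟨gridH n, cat_le_gridH, metricDim_grid hn⟩
  · rintro m ⟨H, hle, rfl⟩
    have hreach : ∀ u v, H.Reachable u v := by
      intro u v
      exact (((cat_dist u).1 v).mono hle)
    have huniv : IsResolvingSet H ↑(Finset.univ : Finset (Fin n ⊕ Fin n × Fin 2)) := by
      intro u v h
      have := h u (by simp)
      rw [SimpleGraph.dist_self] at this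
      exact ((hreach u v).dist_eq_zero_iff).mp this.symm
    have hne : {m | ∃ W : Finset (Fin n ⊕ Fin n × Fin 2), W.card = m ∧ IsResolvingSet H ↑W}.Nonempty :=
      ⟨_, Finset.univ, rfl, huniv⟩
    obtain ⟨W, hWc, hWr⟩ := Nat.sInf_mem hne
    have := two_le_resolving hn H hle W hWr
    unfold metricDim
    omega
open SimpleGraph

lemma cat_connected {n : ℕ} (hn : 0 < n) : (caterpillar n).Connected := by
  have : Nonempty (Fin n ⊕ Fin n × Fin 2) := ⟨Sum.inl ⟨0, hn⟩⟩
  exact Connected.mk (fun u v => ((cat_dist u).1 v))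

lemma cat_acyclic {n : ℕ} : (caterpillar n).IsAcyclic := by
  rw [isAcyclic_iff_forall_adj_isBridge]
  intro x y hadj
  rw [isBridge_iff]
  rcases (cat_adj_iff x y).mp hadj with ⟨i, j, hij, rfl, rfl⟩ | ⟨i, s, ⟨rfl, rfl⟩ | ⟨rfl, rfl⟩⟩
  · -- path edge
    rcases hij with hij | hij
    · -- i + 1 = j : cut at i
      apply noReach {z | cx z ≤ (i:ℕ)}
      · intro a b hab
        rw [deleteEdges, sdiff_adj, fromEdgeSet_adj] at hab
        obtain ⟨hab1, hab2⟩ := hab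
        simp only [Set.mem_singleton_iff] at hab2
        rcases (cat_adj_iff a b).mp hab1 with ⟨p, q, hpq, rfl, rfl⟩ | ⟨p, t, ⟨rfl, rfl⟩ | ⟨rfl, rfl⟩⟩
        · -- path edge not equal deleted one
          have hne : ¬((p = i ∧ q = j) ∨ (p = j ∧ q = i)) := by
            intro hc
            apply hab2
            constructor
            · rcases hc with ⟨h1, h2⟩ | ⟨h1, h2⟩
              · rw [Sym2.eq_iff]; exact Or.inl ⟨by rw [h1], by rw [h2]⟩
              · rw [Sym2.eq_iff]; exact Or.inr ⟨by rw [h1], by rw [h2]⟩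
            · simp [Fin.ext_iff]; omega
          simp only [Set.mem_setOf_eq, cx, Sum.elim_inl]
          simp only [Fin.ext_iff] at hne
          push_neg at hne
          constructor <;> intro <;> omega
        · simp [Set.mem_setOf_eq, cx]
        · simp [Set.mem_setOf_eq, cx]
      · simp [cx]
      · simp [cx]; omega
    · -- j + 1 = i : cut at j
      apply noReach {z | (j:ℕ) + 1 ≤ cx z}
      · intro a b hab
        rw [deleteEdges, sdiff_adj, fromEdgeSet_adj] at hab
        obtain ⟨hab1, hab2⟩ := hab
        simp only [Set.mem_singleton_iff] at hab2
        rcases (cat_adj_iff a b).mp hab1 with ⟨p, q, hpq, rfl, rfl⟩ | ⟨p, t, ⟨rfl, rfl⟩ | ⟨rfl, rfl⟩⟩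
        · have hne : ¬((p = i ∧ q = j) ∨ (p = j ∧ q = i)) := by
            intro hc
            apply hab2
            constructor
            · rcases hc with ⟨h1, h2⟩ | ⟨h1, h2⟩
              · rw [Sym2.eq_iff]; exact Or.inl ⟨by rw [h1], by rw [h2]⟩
              · rw [Sym2.eq_iff]; exact Or.inr ⟨by rw [h1], by rw [h2]⟩
            · simp [Fin.ext_iff]; omega
          simp only [Set.mem_setOf_eq, cx, Sum.elim_inl]
          simp only [Fin.ext_iff] at hne
          push_neg at hne
          constructor <;> intro <;> omega
        · simp [Set.mem_setOf_eq, cx]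
        · simp [Set.mem_setOf_eq, cx]
      · simp [cx]; omega
      · simp [cx]
  · -- leaf edge, x = inl i, y = inr (i, s)
    apply noReach {z | z ≠ Sum.inr (i, s)}
    · intro a b hab
      rw [deleteEdges, sdiff_adj, fromEdgeSet_adj] at hab
      obtain ⟨hab1, hab2⟩ := hab
      simp only [Set.mem_singleton_iff] at hab2
      have ha' : a ≠ Sum.inr (i, s) := by
        rintro rfl
        rcases (cat_adj_iff _ b).mp hab1 with ⟨p, q, hpq, h1, h2⟩ | ⟨p, t, ⟨h1, h2⟩ | ⟨h1, h2⟩⟩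
        · exact absurd h1 (by simp)
        · exact absurd h1 (by simp)
        · have h3 : i = p := congrArg Prod.fst (Sum.inr.inj h1)
          apply hab2
          refine ⟨?_, hab1.ne⟩
          rw [h2, Sym2.eq_iff]
          right
          exact ⟨rfl, by first | rw [h3] | rw [← h3]⟩
      have hb' : b ≠ Sum.inr (i, s) := by
        rintro rfl
        rcases (cat_adj_iff a _).mp hab1 with ⟨p, q, hpq, h1, h2⟩ | ⟨p, t, ⟨h1, h2⟩ | ⟨h1, h2⟩⟩
        · exact absurd h2 (by simp)
        · have h3 : i = p := congrArg Prod.fst (Sum.inr.inj h2)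
          apply hab2
          refine ⟨?_, hab1.ne⟩
          rw [h1, Sym2.eq_iff]
          left
          exact ⟨by first | rw [h3] | rw [← h3], rfl⟩
        · exact absurd h2 (by simp)
      simp [Set.mem_setOf_eq, ha', hb']
    · simp
    · simp
  · -- leaf edge, x = inr (i, s), y = inl i
    apply noReach {z | z = Sum.inr (i, s)}
    · intro a b hab
      rw [deleteEdges, sdiff_adj, fromEdgeSet_adj] at hab
      obtain ⟨hab1, hab2⟩ := hab
      simp only [Set.mem_singleton_iff] at hab2
      have ha' : a ≠ Sum.inr (i, s) := by
        rintro rfl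
        rcases (cat_adj_iff _ b).mp hab1 with ⟨p, q, hpq, h1, h2⟩ | ⟨p, t, ⟨h1, h2⟩ | ⟨h1, h2⟩⟩
        · exact absurd h1 (by simp)
        · exact absurd h1 (by simp)
        · have h3 : i = p := congrArg Prod.fst (Sum.inr.inj h1)
          apply hab2
          refine ⟨?_, hab1.ne⟩
          rw [h2, Sym2.eq_iff]
          left
          exact ⟨rfl, by first | rw [h3] | rw [← h3]⟩
      have hb' : b ≠ Sum.inr (i, s) := by
        rintro rfl
        rcases (cat_adj_iff a _).mp hab1 with ⟨p, q, hpq, h1, h2⟩ | ⟨p, t, ⟨h1, h2⟩ | ⟨h1, h2⟩⟩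
        · exact absurd h2 (by simp)
        · have h3 : i = p := congrArg Prod.fst (Sum.inr.inj h2)
          apply hab2
          refine ⟨?_, hab1.ne⟩
          rw [h1, Sym2.eq_iff]
          right
          exact ⟨by first | rw [h3] | rw [← h3], rfl⟩
        · exact absurd h2 (by simp)
      simp [Set.mem_setOf_eq, ha', hb']
    · simp
    · simp

lemma cat_isTree {n : ℕ} (hn : 0 < n) : (caterpillar n).IsTree :=
  ⟨cat_connected hn, cat_acyclic⟩
/-- For every `b > 2` there is a tree with `β(T) = b` and `τ(T) = 2`; specifically the
caterpillar `L_{3n}` satisfies `β = n` and `τ = 2`. -/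
theorem trees_large_dim_threshold_two :
    (∀ b : ℕ, 2 < b → ∃ (V : Type) (_ : Fintype V) (T : SimpleGraph V),
      T.IsTree ∧ metricDim T = b ∧ thresholdDim T = 2) ∧
    ∀ n : ℕ, 2 < n → (caterpillar n).IsTree ∧
      metricDim (caterpillar n) = n ∧ thresholdDim (caterpillar n) = 2 := by
  constructor
  · intro b hb
    exact ⟨Fin b ⊕ Fin b × Fin 2, inferInstance, caterpillar b,
      cat_isTree (by omega), metricDim_cat, thresholdDim_cat hb⟩
  · intro n hn
    exact ⟨cat_isTree (by omega), metricDim_cat, thresholdDim_cat hn⟩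
end

section
/- The star K_{1,6} has metric dimension 5 and threshold dimension 3; in particular, no graph of order 7 and diameter 2 has metric dimension 2. -/
open SimpleGraph

section Aux

variable {V : Type*}

/-- Distance formula for graphs where any two distinct nonadjacent vertices have a
common neighbor. -/
lemma dist_formula [DecidableEq V] (H : SimpleGraph V) [DecidableRel H.Adj]
    (h : ∀ u v : V, u ≠ v → ¬H.Adj u v → ∃ w, H.Adj u w ∧ H.Adj w v) (u v : V) :
    H.dist u v = if u = v then 0 else if H.Adj u v then 1 else 2 := by
  split_ifs with h1 h2
  · subst h1; exact SimpleGraph.dist_self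
  · exact SimpleGraph.dist_eq_one_iff_adj.mpr h2
  · obtain ⟨w, hw1, hw2⟩ := h u v h1 h2
    let p : H.Walk u v := SimpleGraph.Walk.cons hw1 (SimpleGraph.Walk.cons hw2 SimpleGraph.Walk.nil)
    have hplen : p.length = 2 := rfl
    have hle : H.dist u v ≤ 2 := hplen ▸ SimpleGraph.dist_le p
    have hne0 : H.dist u v ≠ 0 := by
      intro h0
      rcases SimpleGraph.dist_eq_zero_iff_eq_or_not_reachable.mp h0 with h' | h'
      · exact h1 h'
      · exact h' ⟨p⟩
    have hne1 : H.dist u v ≠ 1 := fun h' => h2 (SimpleGraph.dist_eq_one_iff_adj.mp h')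
    omega

lemma card_le_six [Fintype V] [DecidableEq V] (H : SimpleGraph V)
    (hzero : ∀ u v : V, H.dist u v = 0 → u = v)
    (hle : ∀ u v : V, H.dist u v ≤ 2)
    (a b : V) (hres : IsResolvingSet H {a, b}) :
    Fintype.card V ≤ 6 := by
  set d := H.dist a b with hd
  set T : Finset (ℕ × ℕ) := {(0, d), (d, 0), (1,1), (1,2), (2,1), (2,2)} with hT
  have hmaps : ∀ v : V, (H.dist a v, H.dist b v) ∈ T := by
    intro v
    by_cases hva : H.dist a v = 0
    · have hveq : a = v := hzero _ _ hva
      subst hveq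
      have h0 : H.dist a a = 0 := SimpleGraph.dist_self
      have hcomm : H.dist b a = H.dist a b := SimpleGraph.dist_comm
      rw [h0, hcomm, ← hd, hT]
      simp
    · by_cases hvb : H.dist b v = 0
      · have hveq : b = v := hzero _ _ hvb
        subst hveq
        have h0 : H.dist b b = 0 := SimpleGraph.dist_self
        rw [h0, ← hd, hT]
        simp
      · have h1 := hle a v
        have h2 := hle b v
        interval_cases h3 : H.dist a v <;> interval_cases h4 : H.dist b v <;>
          simp_all [hT]
  have hinj : Set.InjOn (fun v : V => (H.dist a v, H.dist b v)) ↑(Finset.univ : Finset V) := by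
    intro u _ v _ huv
    apply hres u v
    intro w hw
    rcases hw with hw | hw
    · subst hw; exact (Prod.mk.injEq _ _ _ _ ▸ huv).1
    · simp only [Set.mem_singleton_iff] at hw
      subst hw; exact (Prod.mk.injEq _ _ _ _ ▸ huv).2
  have hcard := Finset.card_le_card_of_injOn (fun v : V => (H.dist a v, H.dist b v))
    (fun v _ => hmaps v) hinj
  have hT6 : T.card ≤ 6 := by
    have h1 := Finset.card_insert_le (0, d) ({(d, 0), (1,1), (1,2), (2,1), (2,2)} : Finset (ℕ × ℕ))
    have h2 := Finset.card_insert_le (d, 0) ({(1,1), (1,2), (2,1), (2,2)} : Finset (ℕ × ℕ))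
    have h3 : ({(1,1), (1,2), (2,1), (2,2)} : Finset (ℕ × ℕ)).card ≤ 4 := by decide
    simp only [hT]
    omega
  calc Fintype.card V = (Finset.univ : Finset V).card := (Finset.card_univ).symm
    _ ≤ T.card := hcard
    _ ≤ 6 := hT6

lemma resolving_card [Fintype V] [DecidableEq V] (H : SimpleGraph V)
    (hzero : ∀ u v : V, H.dist u v = 0 → u = v)
    (hle : ∀ u v : V, H.dist u v ≤ 2)
    (hcard : Fintype.card V = 7) (W : Finset V) (hres : IsResolvingSet H ↑W) :
    3 ≤ W.card := by
  by_contra hlt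
  push_neg at hlt
  have hW2 : W.card ≤ 2 := by omega
  obtain ⟨W', hWW', -, hW'card⟩ := Finset.exists_subsuperset_card_eq (Finset.subset_univ W) hW2
    (by rw [Finset.card_univ, hcard]; omega)
  obtain ⟨a, b, hab, hW'eq⟩ := Finset.card_eq_two.mp hW'card
  have hres' : IsResolvingSet H {a, b} := by
    intro u v h
    apply hres u v
    intro w hw
    apply h
    have : w ∈ W' := hWW' hw
    rw [hW'eq] at this
    simpa using this
  have := card_le_six H hzero hle a b hres'
  omega

end Aux

section StarStuff

abbrev V7 := Fin 1 ⊕ Fin 6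

instance : DecidableRel (completeBipartiteGraph (Fin 1) (Fin 6)).Adj :=
  fun u v => inferInstanceAs (Decidable ((u.isLeft ∧ v.isRight) ∨ (u.isRight ∧ v.isLeft)))

lemma star_common : ∀ u v : V7, u ≠ v → ¬(completeBipartiteGraph (Fin 1) (Fin 6)).Adj u v →
    ∃ w, (completeBipartiteGraph (Fin 1) (Fin 6)).Adj u w ∧
      (completeBipartiteGraph (Fin 1) (Fin 6)).Adj w v := by decide

/-- computable distance in the star -/
def dG (w u : V7) : ℕ :=
  if w = u then 0 else if (completeBipartiteGraph (Fin 1) (Fin 6)).Adj w u then 1 else 2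

lemma dG_eq (w u : V7) : (completeBipartiteGraph (Fin 1) (Fin 6)).dist w u = dG w u :=
  dist_formula _ star_common w u

def W5 : Finset V7 := {.inr 0, .inr 1, .inr 2, .inr 3, .inr 4}

def W3 : Finset V7 := {.inr 0, .inr 1, .inr 2}

/-- the supergraph adjacency -/
def HAdj : V7 → V7 → Bool
  | .inl _, .inl _ => false
  | .inl _, .inr _ => true
  | .inr _, .inl _ => true
  | .inr i, .inr j => decide ((i.val, j.val) ∈
      [(3,0),(0,3),(3,1),(1,3),(4,0),(0,4),(4,2),(2,4),(5,1),(1,5),(5,2),(2,5)])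

def Hgraph : SimpleGraph V7 where
  Adj u v := HAdj u v = true
  symm := ⟨fun u v h => (by decide : ∀ u v : V7, HAdj u v = true → HAdj v u = true) u v h⟩
  loopless := ⟨fun v h => (by decide : ∀ v : V7, ¬ HAdj v v = true) v h⟩

instance : DecidableRel Hgraph.Adj := fun u v => inferInstanceAs (Decidable (HAdj u v = true))

lemma H_common : ∀ u v : V7, u ≠ v → ¬Hgraph.Adj u v →
    ∃ w, Hgraph.Adj u w ∧ Hgraph.Adj w v := by decide

def dH (w u : V7) : ℕ := if w = u then 0 else if Hgraph.Adj w u then 1 else 2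

lemma dH_eq (w u : V7) : Hgraph.dist w u = dH w u := dist_formula _ H_common w u

lemma Hzero : ∀ u v : V7, Hgraph.dist u v = 0 → u = v := by
  intro u v h
  rw [dH_eq] at h
  unfold dH at h
  split_ifs at h with h1 h2 <;> simp_all

lemma Hle : ∀ u v : V7, Hgraph.dist u v ≤ 2 := by
  intro u v
  rw [dH_eq]
  unfold dH
  split_ifs <;> omega

lemma star_le_H : completeBipartiteGraph (Fin 1) (Fin 6) ≤ Hgraph := by
  intro u v h
  rcases u with a | a <;> rcases v with b | b <;>
    simp only [completeBipartiteGraph_adj] at h <;> simp_all <;>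
    first
      | (show HAdj _ _ = true; rfl)
      | skip

lemma star_key : ∀ u v : V7, dG (.inr 0) u = dG (.inr 0) v → dG (.inr 1) u = dG (.inr 1) v →
    dG (.inr 2) u = dG (.inr 2) v → dG (.inr 3) u = dG (.inr 3) v →
    dG (.inr 4) u = dG (.inr 4) v → u = v := by decide

lemma star_res5 :
    IsResolvingSet (completeBipartiteGraph (Fin 1) (Fin 6))
      ↑W5 := by
  intro u v h
  have h' : ∀ w ∈ W5, dG w u = dG w v :=
    fun w hw => by rw [← dG_eq, ← dG_eq]; exact h w (Finset.mem_coe.mpr hw)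
  exact star_key u v (h' _ (by decide)) (h' _ (by decide)) (h' _ (by decide))
    (h' _ (by decide)) (h' _ (by decide))

lemma metricDim_star : metricDim (completeBipartiteGraph (Fin 1) (Fin 6)) = 5 := by
  apply le_antisymm
  · refine Nat.sInf_le ?_
    show (5 : ℕ) ∈ {n | ∃ W : Finset V7, W.card = n ∧
      IsResolvingSet (completeBipartiteGraph (Fin 1) (Fin 6)) ↑W}
    exact ⟨W5, by decide, star_res5⟩
  · have hne : {n | ∃ W : Finset V7, W.card = n ∧
        IsResolvingSet (completeBipartiteGraph (Fin 1) (Fin 6)) ↑W}.Nonempty :=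
      ⟨5, W5, by decide, star_res5⟩
    apply le_csInf hne
    rintro n ⟨W, hWcard, hres⟩
    by_contra hn
    push_neg at hn
    have hW4 : W.card ≤ 4 := by omega
    have hScard : (Finset.univ.filter (fun i : Fin 6 => (Sum.inr i : V7) ∈ W)).card ≤ 4 := by
      have := Finset.card_le_card_of_injOn
        (s := Finset.univ.filter (fun i : Fin 6 => (Sum.inr i : V7) ∈ W)) (t := W)
        (fun i : Fin 6 => (Sum.inr i : V7))
        (fun i hi => (Finset.mem_filter.mp hi).2)
        (fun x _ y _ h => Sum.inr.inj h)
      omega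
    have hsum := Finset.card_filter_add_card_filter_not
      (s := (Finset.univ : Finset (Fin 6))) (p := fun i : Fin 6 => (Sum.inr i : V7) ∈ W)
    rw [Finset.card_univ] at hsum
    have hS'2 : 1 < (Finset.univ.filter
        (fun i : Fin 6 => ¬(Sum.inr i : V7) ∈ W)).card := by
      simp only [Fintype.card_fin] at hsum
      omega
    obtain ⟨i, j, hi, hj, hij⟩ := Finset.one_lt_card_iff.mp hS'2
    have hiW : (Sum.inr i : V7) ∉ W := (Finset.mem_filter.mp hi).2
    have hjW : (Sum.inr j : V7) ∉ W := (Finset.mem_filter.mp hj).2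
    have : (Sum.inr i : V7) = Sum.inr j := by
      apply hres
      intro w hw
      have hwW : w ∈ W := Finset.mem_coe.mp hw
      rw [dG_eq, dG_eq]
      rcases w with a | k
      · simp [dG, completeBipartiteGraph]
      · have hki : k ≠ i := fun h => hiW (h ▸ hwW)
        have hkj : k ≠ j := fun h => hjW (h ▸ hwW)
        simp [dG, hki, hkj, completeBipartiteGraph]
    exact hij (Sum.inr.inj this)

lemma H_key : ∀ u v : V7, dH (.inr 0) u = dH (.inr 0) v → dH (.inr 1) u = dH (.inr 1) v →
    dH (.inr 2) u = dH (.inr 2) v → u = v := by decide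

lemma H_res3 : IsResolvingSet Hgraph ↑W3 := by
  intro u v h
  have h' : ∀ w ∈ W3, dH w u = dH w v :=
    fun w hw => by rw [← dH_eq, ← dH_eq]; exact h w (Finset.mem_coe.mpr hw)
  exact H_key u v (h' _ (by decide)) (h' _ (by decide)) (h' _ (by decide))

lemma metricDim_H : metricDim Hgraph = 3 := by
  apply le_antisymm
  · refine Nat.sInf_le ?_
    show (3 : ℕ) ∈ {n | ∃ W : Finset V7, W.card = n ∧ IsResolvingSet Hgraph ↑W}
    exact ⟨W3, by decide, H_res3⟩
  · have hne : {n | ∃ W : Finset V7, W.card = n ∧ IsResolvingSet Hgraph ↑W}.Nonempty :=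
      ⟨3, W3, by decide, H_res3⟩
    apply le_csInf hne
    rintro n ⟨W, hWcard, hres⟩
    have := resolving_card Hgraph Hzero Hle (by decide) W hres
    omega

end StarStuff

/-- `K_{1,6}` has metric dimension `5` and threshold dimension `3`; in particular no
connected graph of order `7` and diameter `2` has metric dimension `2`. -/
theorem star6 :
    metricDim (completeBipartiteGraph (Fin 1) (Fin 6)) = 5 ∧
    thresholdDim (completeBipartiteGraph (Fin 1) (Fin 6)) = 3 ∧
    ∀ (V : Type) [Fintype V] (H : SimpleGraph V), Fintype.card V = 7 →
      H.Connected → H.diam = 2 → metricDim H ≠ 2 := by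
  refine ⟨metricDim_star, ?_, ?_⟩
  · apply le_antisymm
    · refine Nat.sInf_le ?_
      show (3 : ℕ) ∈ {n | ∃ H : SimpleGraph V7,
        completeBipartiteGraph (Fin 1) (Fin 6) ≤ H ∧ metricDim H = n}
      exact ⟨Hgraph, star_le_H, metricDim_H⟩
    · have hne : {n | ∃ H : SimpleGraph V7,
          completeBipartiteGraph (Fin 1) (Fin 6) ≤ H ∧ metricDim H = n}.Nonempty :=
        ⟨3, Hgraph, star_le_H, metricDim_H⟩
      apply le_csInf hne
      rintro n ⟨H', hle', rfl⟩
      classical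
      have hcenter : ∀ b : Fin 6, H'.Adj (Sum.inl 0) (Sum.inr b) := by
        intro b
        apply hle'
        simp [completeBipartiteGraph]
      have hH' : ∀ u v : V7, u ≠ v → ¬H'.Adj u v → ∃ w, H'.Adj u w ∧ H'.Adj w v := by
        intro u v hne hna
        rcases u with a | a <;> rcases v with b | b
        · exact absurd (congrArg Sum.inl (Subsingleton.elim a b)) hne
        · have ha : a = 0 := Subsingleton.elim a 0
          exact absurd (ha ▸ hcenter b) hna
        · have hb : b = 0 := Subsingleton.elim b 0
          exact absurd (hb ▸ (hcenter a).symm) hna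
        · exact ⟨Sum.inl 0, (hcenter a).symm, hcenter b⟩
      have hzero' : ∀ u v : V7, H'.dist u v = 0 → u = v := by
        intro u v h
        rw [dist_formula H' hH'] at h
        split_ifs at h with h1 h2 <;> simp_all
      have hle2' : ∀ u v : V7, H'.dist u v ≤ 2 := by
        intro u v
        rw [dist_formula H' hH']
        split_ifs <;> omega
      have hSne : {n | ∃ W : Finset V7, W.card = n ∧ IsResolvingSet H' ↑W}.Nonempty := by
        refine ⟨(Finset.univ : Finset V7).card, Finset.univ, rfl, fun u v h => ?_⟩
        have := h u (Finset.mem_coe.mpr (Finset.mem_univ u))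
        rw [SimpleGraph.dist_self] at this
        exact hzero' u v this.symm
      have hmem : ∃ W : Finset V7, W.card = metricDim H' ∧ IsResolvingSet H' ↑W :=
        Nat.sInf_mem hSne
      obtain ⟨W, hWcard, hres⟩ := hmem
      have h3 := resolving_card H' hzero' hle2' (by decide) W hres
      omega
  · intro V _ H hcard hconn hdiam hm2
    classical
    have hzero : ∀ u v : V, H.dist u v = 0 → u = v := fun u v h =>
      (hconn.dist_eq_zero_iff).mp h
    have hle : ∀ u v : V, H.dist u v ≤ 2 := by
      intro u v
      have hediam : H.ediam ≠ ⊤ := SimpleGraph.ediam_ne_top_of_diam_ne_zero (by omega)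
      have := SimpleGraph.dist_le_diam hediam (u := u) (v := v)
      omega
    have hSne : {n | ∃ W : Finset V, W.card = n ∧ IsResolvingSet H ↑W}.Nonempty := by
      refine ⟨(Finset.univ : Finset V).card, Finset.univ, rfl, fun u v h => ?_⟩
      have := h u (Finset.mem_coe.mpr (Finset.mem_univ u))
      rw [SimpleGraph.dist_self] at this
      exact hzero u v this.symm
    have hmem : ∃ W : Finset V, W.card = metricDim H ∧ IsResolvingSet H ↑W :=
      Nat.sInf_mem hSne
    obtain ⟨W, hWcard, hres⟩ := hmem
    have h3 := resolving_card H hzero hle hcard W hres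
    omega
end
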